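/- arXiv:2011.12251 — 7 statements merged into one kernel-verified Lean document; each statement's English description precedes it below -/
import Mathlib

section
/- The function p ↦ log((1-p)(2-p)Γ((1-p)/2)) is strictly concave on the interval (0,1). -/
open Real Set Filter Topology

section helpers

/-- Concavity on `Ioo 0 1` from explicit first and second derivatives. -/
lemma myConcaveOn {f f' f'' : ℝ → ℝ}
    (h1 : ∀ x ∈ Ioo (0:ℝ) 1, HasDerivAt f (f' x) x)
    (h2 : ∀ x ∈ Ioo (0:ℝ) 1, HasDerivAt f' (f'' x) x)
    (h0 : ∀ x ∈ Ioo (0:ℝ) 1, f'' x ≤ 0) : ConcaveOn ℝ (Ioo 0 1) f := by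
  have hio : interior (Ioo (0:ℝ) 1) = Ioo 0 1 := isOpen_Ioo.interior_eq
  apply concaveOn_of_deriv2_nonpos (convex_Ioo 0 1)
  · exact fun x hx => (h1 x hx).continuousAt.continuousWithinAt
  · rw [hio]; exact fun x hx => (h1 x hx).differentiableAt.differentiableWithinAt
  · rw [hio]; intro x hx
    have hev : deriv f =ᶠ[nhds x] f' :=
      Filter.eventuallyEq_of_mem (isOpen_Ioo.mem_nhds hx) (fun y hy => (h1 y hy).deriv)
    exact ((h2 x hx).differentiableAt.congr_of_eventuallyEq hev).differentiableWithinAt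
  · rw [hio]; intro x hx
    have hev : deriv f =ᶠ[nhds x] f' :=
      Filter.eventuallyEq_of_mem (isOpen_Ioo.mem_nhds hx) (fun y hy => (h1 y hy).deriv)
    have e : deriv^[2] f x = deriv (deriv f) x := rfl
    rw [e, hev.deriv_eq, (h2 x hx).deriv]
    exact h0 x hx

lemma myStrictConcaveOn {f f' f'' : ℝ → ℝ}
    (h1 : ∀ x ∈ Ioo (0:ℝ) 1, HasDerivAt f (f' x) x)
    (h2 : ∀ x ∈ Ioo (0:ℝ) 1, HasDerivAt f' (f'' x) x)
    (h0 : ∀ x ∈ Ioo (0:ℝ) 1, f'' x < 0) : StrictConcaveOn ℝ (Ioo 0 1) f := by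
  have hio : interior (Ioo (0:ℝ) 1) = Ioo 0 1 := isOpen_Ioo.interior_eq
  apply strictConcaveOn_of_deriv2_neg (convex_Ioo 0 1)
  · exact fun x hx => (h1 x hx).continuousAt.continuousWithinAt
  · rw [hio]; intro x hx
    have hev : deriv f =ᶠ[nhds x] f' :=
      Filter.eventuallyEq_of_mem (isOpen_Ioo.mem_nhds hx) (fun y hy => (h1 y hy).deriv)
    have e : deriv^[2] f x = deriv (deriv f) x := rfl
    rw [e, hev.deriv_eq, (h2 x hx).deriv]
    exact h0 x hx

lemma haff (c p : ℝ) : HasDerivAt (fun q : ℝ => c - q) (-1) p := by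
  exact (hasDerivAt_id' p).const_sub c

lemma hdA {c p : ℝ} (h : p < c) :
    HasDerivAt (fun q => (c - q) * Real.log (c - q)) (-Real.log (c - p) - 1) p := by
  have hpos : 0 < c - p := sub_pos.mpr h
  have h2 : HasDerivAt (fun q => Real.log (c - q)) ((-1) / (c - p)) p :=
    (haff c p).log hpos.ne'
  have := (haff c p).mul h2
  refine this.congr_deriv ?_
  field_simp
  ring

lemma hdB {c p : ℝ} (h : p < c) :
    HasDerivAt (fun q => -Real.log (c - q) - 1) ((c - p)⁻¹) p := by
  have hpos : 0 < c - p := sub_pos.mpr h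
  have h2 : HasDerivAt (fun q => Real.log (c - q)) ((-1) / (c - p)) p :=
    (haff c p).log hpos.ne'
  have := (h2.neg).sub_const 1
  refine this.congr_deriv ?_
  field_simp

lemma hdlog {c p : ℝ} (h : p < c) :
    HasDerivAt (fun q => Real.log (c - q)) (-(c - p)⁻¹) p := by
  have hpos : 0 < c - p := sub_pos.mpr h
  have := (haff c p).log hpos.ne'
  convert this using 1
  field_simp

lemma hdinv {c p : ℝ} (h : p < c) :
    HasDerivAt (fun q => (c - q)⁻¹) (((c - p) ^ 2)⁻¹) p := by
  have hpos : 0 < c - p := sub_pos.mpr h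
  have := (haff c p).inv hpos.ne'
  refine this.congr_deriv ?_
  field_simp

end helpers

noncomputable section defs

/-- elementary strictly concave part -/
def gfun : ℝ → ℝ := fun p => 2⁻¹ * ((2 - p) * Real.log (2 - p)) + Real.log (2 - p)

/-- concave telescoping blocks -/
def Qf (m : ℕ) : ℝ → ℝ := fun p =>
  (2⁻¹ * ((2 + 2 * ((m:ℝ) + 1) - p) * Real.log (2 + 2 * ((m:ℝ) + 1) - p))
    - 2⁻¹ * ((2 + 2 * (m:ℝ) - p) * Real.log (2 + 2 * (m:ℝ) - p)))
  - Real.log (3 + 2 * (m:ℝ) - p)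

def Ffun (k : ℕ) : ℝ → ℝ := fun p => 2⁻¹ * ((2 + 2 * (k:ℝ) - p) * Real.log (2 + 2 * (k:ℝ) - p))

def Dfun (n : ℕ) : ℝ → ℝ := fun p =>
  (((3 - p) / 2) * Real.log n + Real.log (Nat.factorial n) + ((n:ℝ) + 1) * Real.log 2)
  + (∑ m ∈ Finset.range (n + 1), Qf m p)
  + (-(Ffun (n + 1) p))

def Gfun : ℝ → ℝ := fun p => Real.log (Real.Gamma ((3 - p) / 2)) + Real.log (2 - p)

end defs

lemma concave_Qf (m : ℕ) : ConcaveOn ℝ (Ioo (0:ℝ) 1) (Qf m) := by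
  have hm : (0:ℝ) ≤ (m:ℝ) := Nat.cast_nonneg m
  apply myConcaveOn
    (f' := fun p => (2⁻¹ * (-Real.log (2 + 2 * ((m:ℝ)+1) - p) - 1)
        - 2⁻¹ * (-Real.log (2 + 2 * (m:ℝ) - p) - 1)) + (3 + 2 * (m:ℝ) - p)⁻¹)
    (f'' := fun p => (2⁻¹ * (2 + 2 * ((m:ℝ)+1) - p)⁻¹ - 2⁻¹ * (2 + 2 * (m:ℝ) - p)⁻¹)
        + ((3 + 2 * (m:ℝ) - p) ^ 2)⁻¹)
  · intro x hx
    obtain ⟨hx0, hx1⟩ := hx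
    have h1 : x < 2 + 2 * ((m:ℝ)+1) := by linarith
    have h2 : x < 2 + 2 * (m:ℝ) := by linarith
    have h3 : x < 3 + 2 * (m:ℝ) := by linarith
    have := (((hdA h1).const_mul (2⁻¹:ℝ)).sub ((hdA h2).const_mul (2⁻¹:ℝ))).sub (hdlog h3)
    refine this.congr_deriv ?_
    ring
  · intro x hx
    obtain ⟨hx0, hx1⟩ := hx
    have h1 : x < 2 + 2 * ((m:ℝ)+1) := by linarith
    have h2 : x < 2 + 2 * (m:ℝ) := by linarith
    have h3 : x < 3 + 2 * (m:ℝ) := by linarith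
    exact (((hdB h1).const_mul (2⁻¹:ℝ)).sub ((hdB h2).const_mul (2⁻¹:ℝ))).add (hdinv h3)
  · intro x hx
    obtain ⟨hx0, hx1⟩ := hx
    set b : ℝ := 2 + 2 * (m:ℝ) - x with hb
    have hbpos : 0 < b := by rw [hb]; linarith
    have e1 : (2 + 2 * ((m:ℝ)+1) - x) = b + 2 := by rw [hb]; ring
    have e2 : (3 + 2 * (m:ℝ) - x) = b + 1 := by rw [hb]; ring
    rw [e1, e2]
    have key : (2⁻¹ * (b + 2)⁻¹ - 2⁻¹ * b⁻¹) + ((b + 1) ^ 2)⁻¹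
        = -((b * (b + 2) * (b + 1) ^ 2)⁻¹) := by
      field_simp
      ring
    rw [key, neg_nonpos]
    positivity

lemma concave_sum (n : ℕ) (f : ℕ → ℝ → ℝ) (h : ∀ m, ConcaveOn ℝ (Ioo (0:ℝ) 1) (f m)) :
    ConcaveOn ℝ (Ioo (0:ℝ) 1) (fun p => ∑ m ∈ Finset.range n, f m p) := by
  induction n with
  | zero => simpa using concaveOn_const 0 (convex_Ioo (0:ℝ) 1)
  | succ k ih => simp only [Finset.sum_range_succ]; exact ih.add (h k)

lemma concave_Dfun (n : ℕ) : ConcaveOn ℝ (Ioo (0:ℝ) 1) (Dfun n) := by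
  have hn : (0:ℝ) ≤ (n:ℝ) := Nat.cast_nonneg n
  have hlin : ConcaveOn ℝ (Ioo (0:ℝ) 1)
      (fun p : ℝ => ((3 - p) / 2) * Real.log n + Real.log (Nat.factorial n)
        + ((n:ℝ) + 1) * Real.log 2) := by
    apply myConcaveOn (f' := fun _ => -1 / 2 * Real.log n) (f'' := fun _ => 0)
    · intro x _
      exact ((((haff 3 x).div_const 2).mul_const (Real.log n)).add_const _).add_const _
    · intro x _; exact hasDerivAt_const x _
    · intro x _; exact le_refl 0
  have hF : ConcaveOn ℝ (Ioo (0:ℝ) 1) (fun p => -(Ffun (n+1) p)) := by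
    apply myConcaveOn
      (f' := fun p => -(2⁻¹ * (-Real.log (2 + 2 * ((n:ℝ)+1) - p) - 1)))
      (f'' := fun p => -(2⁻¹ * (2 + 2 * ((n:ℝ)+1) - p)⁻¹))
    · intro x hx
      have h1 : x < 2 + 2 * ((n:ℝ)+1) := by linarith [hx.2]
      have := ((hdA h1).const_mul (2⁻¹ : ℝ)).neg
      simp only [Ffun, Nat.cast_add, Nat.cast_one]; exact this
    · intro x hx
      have h1 : x < 2 + 2 * ((n:ℝ)+1) := by linarith [hx.2]
      exact ((hdB h1).const_mul (2⁻¹ : ℝ)).neg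
    · intro x hx
      have h1 : 0 < 2 + 2 * ((n:ℝ)+1) - x := by linarith [hx.2]
      have : 0 < 2⁻¹ * (2 + 2 * ((n:ℝ)+1) - x)⁻¹ := by positivity
      linarith
  exact (hlin.add (concave_sum (n+1) Qf concave_Qf)).add hF

lemma strict_gfun : StrictConcaveOn ℝ (Ioo (0:ℝ) 1) gfun := by
  apply myStrictConcaveOn
    (f' := fun p => 2⁻¹ * (-Real.log (2 - p) - 1) + (-(2 - p)⁻¹))
    (f'' := fun p => 2⁻¹ * (2 - p)⁻¹ + (-((2 - p) ^ 2)⁻¹))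
  · intro x hx
    have h1 : x < 2 := by linarith [hx.2]
    exact ((hdA h1).const_mul (2⁻¹:ℝ)).add (hdlog h1)
  · intro x hx
    have h1 : x < 2 := by linarith [hx.2]
    exact ((hdB h1).const_mul (2⁻¹:ℝ)).add ((hdinv h1).neg)
  · intro x hx
    obtain ⟨hx0, hx1⟩ := hx
    set t : ℝ := 2 - x with ht
    have ht1 : 1 < t := by rw [ht]; linarith
    have ht2 : t < 2 := by rw [ht]; linarith
    have ht0 : 0 < t := by linarith
    have key : 2⁻¹ * t⁻¹ + (-(t ^ 2)⁻¹) = (t - 2) / (2 * t ^ 2) := by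
      field_simp
      ring
    rw [key]
    apply div_neg_of_neg_of_pos
    · linarith
    · positivity

/-- the key identity -/
lemma key_identity (n : ℕ) {p : ℝ} (hp : p ∈ Ioo (0:ℝ) 1) :
    Real.BohrMollerup.logGammaSeq ((3 - p) / 2) n + Real.log (2 - p)
      = gfun p + Dfun n p := by
  obtain ⟨hp0, hp1⟩ := hp
  have hsum1 : ∑ m ∈ Finset.range (n + 1), Real.log ((3 - p) / 2 + (m:ℝ))
      = (∑ m ∈ Finset.range (n + 1), Real.log (3 + 2 * (m:ℝ) - p))
        - ((n:ℝ) + 1) * Real.log 2 := by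
    have hterm : ∀ m ∈ Finset.range (n + 1),
        Real.log ((3 - p) / 2 + (m:ℝ)) = Real.log (3 + 2 * (m:ℝ) - p) - Real.log 2 := by
      intro m _
      have hm : (0:ℝ) ≤ (m:ℝ) := Nat.cast_nonneg m
      have h1 : (3 - p) / 2 + (m:ℝ) = (3 + 2 * (m:ℝ) - p) / 2 := by ring
      rw [h1, Real.log_div (by linarith) two_ne_zero]
    rw [Finset.sum_congr rfl hterm, Finset.sum_sub_distrib, Finset.sum_const,
      Finset.card_range, nsmul_eq_mul]
    push_cast
    ring
  have hQ : ∀ m : ℕ, Qf m p = (Ffun (m+1) p - Ffun m p) - Real.log (3 + 2 * (m:ℝ) - p) := by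
    intro m
    simp only [Qf, Ffun]
    push_cast
    ring
  have hsumQ : ∑ m ∈ Finset.range (n + 1), Qf m p
      = (Ffun (n+1) p - Ffun 0 p)
        - ∑ m ∈ Finset.range (n + 1), Real.log (3 + 2 * (m:ℝ) - p) := by
    rw [Finset.sum_congr rfl (fun m _ => hQ m), Finset.sum_sub_distrib,
      Finset.sum_range_sub (fun k => Ffun k p)]
  have hF0 : Ffun 0 p = 2⁻¹ * ((2 - p) * Real.log (2 - p)) := by
    simp [Ffun]
  simp only [Real.BohrMollerup.logGammaSeq, Dfun, gfun, hsum1, hsumQ, hF0]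
  ring

lemma tendsto_Dfun {p : ℝ} (hp : p ∈ Ioo (0:ℝ) 1) :
    Tendsto (fun n => Dfun n p) atTop (𝓝 (Gfun p - gfun p)) := by
  have hx : 0 < (3 - p) / 2 := by
    have := hp.2
    linarith
  have h1 : Tendsto (fun n => Real.BohrMollerup.logGammaSeq ((3 - p) / 2) n + Real.log (2 - p))
      atTop (𝓝 (Real.log (Real.Gamma ((3 - p) / 2)) + Real.log (2 - p))) :=
    (Real.BohrMollerup.tendsto_log_gamma hx).add_const _
  have h2 : (fun n => Dfun n p)
      = fun n => (Real.BohrMollerup.logGammaSeq ((3 - p) / 2) n + Real.log (2 - p)) - gfun p := by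
    funext n
    rw [key_identity n hp]
    ring
  rw [h2]
  exact h1.sub_const _

lemma concave_sub : ConcaveOn ℝ (Ioo (0:ℝ) 1) (fun p => Gfun p - gfun p) := by
  refine ⟨convex_Ioo 0 1, ?_⟩
  intro x hx y hy a b ha hb hab
  have hmem : a • x + b • y ∈ Ioo (0:ℝ) 1 := convex_Ioo 0 1 hx hy ha hb hab
  have hL : Tendsto (fun n => a • Dfun n x + b • Dfun n y) atTop
      (𝓝 (a • (Gfun x - gfun x) + b • (Gfun y - gfun y))) :=
    ((tendsto_Dfun hx).const_smul a).add ((tendsto_Dfun hy).const_smul b)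
  exact le_of_tendsto_of_tendsto' hL (tendsto_Dfun hmem)
    (fun n => (concave_Dfun n).2 hx hy ha hb hab)

lemma strict_Gfun : StrictConcaveOn ℝ (Ioo (0:ℝ) 1) Gfun := by
  have h := strict_gfun.add_concaveOn concave_sub
  have e : gfun + (fun p => Gfun p - gfun p) = Gfun := by
    funext p
    simp [Pi.add_apply]
  exact e ▸ h

theorem log_c2_strictly_concave :
    StrictConcaveOn ℝ (Ioo (0:ℝ) 1)
      (fun p => Real.log ((1 - p) * (2 - p) * Real.Gamma ((1 - p) / 2))) := by
  have hstrict : StrictConcaveOn ℝ (Ioo (0:ℝ) 1) (fun p => Gfun p + Real.log 2) :=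
    strict_Gfun.add_concaveOn (concaveOn_const (Real.log 2) (convex_Ioo 0 1))
  have heq : ∀ q ∈ Ioo (0:ℝ) 1,
      Real.log ((1 - q) * (2 - q) * Real.Gamma ((1 - q) / 2))
        = Gfun q + Real.log 2 := by
    intro q hq
    obtain ⟨h0, h1⟩ := hq
    have hq2 : 0 < 2 - q := by linarith
    have hhalf : 0 < (1 - q) / 2 := by linarith
    have hG3 : 0 < Real.Gamma ((3 - q) / 2) := Real.Gamma_pos_of_pos (by linarith)
    have key : Real.Gamma ((3 - q) / 2) = (1 - q) / 2 * Real.Gamma ((1 - q) / 2) := by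
      rw [show (3 - q) / 2 = (1 - q) / 2 + 1 by ring]
      exact Real.Gamma_add_one hhalf.ne'
    have e2 : (1 - q) * (2 - q) * Real.Gamma ((1 - q) / 2)
        = Real.Gamma ((3 - q) / 2) * (2 - q) * 2 := by
      rw [key]; ring
    rw [e2, Real.log_mul (mul_ne_zero hG3.ne' hq2.ne') two_ne_zero,
      Real.log_mul hG3.ne' hq2.ne']
    simp [Gfun]
  obtain ⟨hcx, hlt⟩ := hstrict
  refine ⟨hcx, ?_⟩
  intro x hx y hy hxy a b ha hb hab
  have hmem : a • x + b • y ∈ Ioo (0:ℝ) 1 := hcx hx hy ha.le hb.le hab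
  have h1 := heq x hx
  have h2 := heq y hy
  have h3 := heq _ hmem
  have h4 := hlt hx hy hxy ha hb hab
  simp only [smul_eq_mul] at h3 h4 ⊢
  rw [h1, h2, h3]
  exact h4
end

section
/- For every real t, |cos t − (sin t)/t| < 6/5 (with (sin t)/t interpreted as 1 at t = 0). -/
open Real in
lemma aux_cos_sub_sinc (t : ℝ) (ht : 0 < t) : |Real.cos t - Real.sin t / t| < 6 / 5 := by
  rcases le_or_gt t 1.6 with h16 | h16
  · rw [abs_lt]
    have hs : Real.sin t ≤ t := Real.sin_le ht.le
    have hst : Real.sin t / t ≤ 1 := by rw [div_le_one ht]; exact hs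
    have hpi := Real.pi_gt_d6
    have hc : -(1/5) < Real.cos t := by
      rcases le_or_gt t (Real.pi / 2) with h2 | h2
      · have : 0 ≤ Real.cos t := Real.cos_nonneg_of_mem_Icc ⟨by linarith, h2⟩
        linarith
      · have h3 : Real.sin (t - Real.pi / 2) ≤ t - Real.pi / 2 := Real.sin_le (by linarith)
        rw [Real.sin_sub_pi_div_two] at h3
        linarith
    constructor
    · linarith
    · have hs0 : 0 ≤ Real.sin t := Real.sin_nonneg_of_nonneg_of_le_pi ht.le (by linarith)
      have : 0 ≤ Real.sin t / t := div_nonneg hs0 ht.le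
      linarith [Real.cos_le_one t]
  · have hpyth := Real.sin_sq_add_cos_sq t
    set u : ℝ := 1 / t with hu
    have hut : u * t = 1 := one_div_mul_cancel ht.ne'
    have hu0 : 0 < u := by positivity
    have hul : u < 5/8 := by
      rw [hu, div_lt_iff₀ ht]; nlinarith
    have hdiv : Real.sin t / t = Real.sin t * u := by rw [hu]; ring
    have key : (Real.cos t - Real.sin t * u)^2 < (6/5)^2 := by
      nlinarith [sq_nonneg (Real.sin t + Real.cos t * u), sq_nonneg u, sq_nonneg (Real.sin t), sq_nonneg (Real.cos t)]
    rw [hdiv]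
    nlinarith [abs_nonneg (Real.cos t - Real.sin t * u), sq_abs (Real.cos t - Real.sin t * u)]

theorem abs_cos_sub_sinc_lt (t : ℝ) :
    |Real.cos t - (if t = 0 then 1 else Real.sin t / t)| < 6 / 5 := by
  rcases eq_or_ne t 0 with rfl | ht
  · simp
  · rw [if_neg ht]
    rcases lt_or_gt_of_ne ht with hneg | hpos
    · have := aux_cos_sub_sinc (-t) (by linarith)
      rw [Real.cos_neg, Real.sin_neg, neg_div_neg_eq] at this
      exact this
    · exact aux_cos_sub_sinc t hpos
end

section
/- Let y_1 = max over t in [π,2π] of |sin(t)/t|. For every y in (0,y_1), the unique solution t_0 in (0,π) of sin(t)/t = y satisfies t_0 > 2. -/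
open Real Set

theorem solution_gt_two
    (y₁ : ℝ) (hy₁ : y₁ = sSup ((fun t => |Real.sin t / t|) '' Icc π (2 * π)))
    (y : ℝ) (hy : y ∈ Ioo 0 y₁)
    (t₀ : ℝ) (ht₀ : t₀ ∈ Ioo 0 π) (hsol : Real.sin t₀ / t₀ = y) :
    t₀ > 2 := by
  by_contra h
  push_neg at h
  obtain ⟨ht0, _⟩ := ht₀
  -- y₁ ≤ 1/π
  have hpi3 : (3 : ℝ) < π := Real.pi_gt_three
  have hy₁le : y₁ ≤ 1 / π := by
    rw [hy₁]
    apply Real.sSup_le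
    · rintro x ⟨t, ⟨ht1, ht2⟩, rfl⟩
      have htpos : 0 < t := lt_of_lt_of_le (by linarith) ht1
      simp only []
      rw [abs_div, abs_of_pos htpos]
      apply div_le_div₀ (by norm_num) (Real.abs_sin_le_one t) (by linarith) ht1
    · positivity
  -- sin 2 ≥ 3/4
  have hsin1 : Real.sin 1 > 3 / 4 := by
    have := Real.sin_gt_sub_cube (by norm_num : (0:ℝ) < 1)
    norm_num at this
    linarith
  have hcos1 : Real.cos 1 > 1 / 2 := by
    have hc : Real.cos 1 = 2 * Real.cos (1/2) ^ 2 - 1 := by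
      rw [← Real.cos_two_mul]; norm_num
    have hpy := Real.sin_sq_add_cos_sq (1/2 : ℝ)
    have hs : Real.sin (1/2) < 1/2 := by
      have := Real.sin_lt (by norm_num : (0:ℝ) < 1/2)
      linarith
    have hs0 : 0 ≤ Real.sin (1/2) := Real.sin_nonneg_of_nonneg_of_le_pi (by norm_num) (by linarith)
    nlinarith
  have hsin2 : Real.sin 2 > 3 / 4 := by
    have : Real.sin 2 = 2 * Real.sin 1 * Real.cos 1 := by
      have := Real.sin_two_mul 1
      norm_num at this; linarith
    nlinarith
  -- concavity: sin t₀ ≥ (t₀/2) * sin 2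
  have hconc : Real.sin t₀ ≥ (t₀ / 2) * Real.sin 2 := by
    have h2mem : (2:ℝ) ∈ Icc 0 π := ⟨by norm_num, by linarith⟩
    have h0mem : (0:ℝ) ∈ Icc 0 π := ⟨le_refl 0, by linarith⟩
    have := strictConcaveOn_sin_Icc.concaveOn.2 h0mem h2mem
      (show (0:ℝ) ≤ 1 - t₀ / 2 by linarith) (show (0:ℝ) ≤ t₀ / 2 by linarith)
      (show (1 - t₀ / 2) + t₀ / 2 = 1 by ring)
    simp only [smul_eq_mul, Real.sin_zero, mul_zero, zero_add] at this
    rw [show t₀ / 2 * 2 = t₀ by ring] at this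
    linarith
  have ht0div : Real.sin t₀ / t₀ ≥ Real.sin 2 / 2 := by
    rw [ge_iff_le, div_le_div_iff₀ (by norm_num) ht0]
    nlinarith
  obtain ⟨hy0, hyy₁⟩ := hy
  have : (1:ℝ)/π < 3/8 := by
    rw [div_lt_div_iff₀ (by linarith) (by norm_num)]
    linarith
  linarith [hsol ▸ ht0div]
end

section
/- For every p in (0,1), (1-p)(2-p)Γ((1-p)/2) ≥ 2^{(3-p)/2}. -/
open Real

theorem gamma_lower_bound {p : ℝ} (hp : p ∈ Set.Ioo (0:ℝ) 1) :
    (1 - p) * (2 - p) * Real.Gamma ((1 - p) / 2) ≥ (2:ℝ) ^ ((3 - p) / 2) := by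
  obtain ⟨hp0, hp1⟩ := hp
  set x : ℝ := (1 - p) / 2 with hxdef
  have hx0 : 0 < x := by rw [hxdef]; linarith
  have hx1 : x < 1 / 2 := by rw [hxdef]; linarith
  have h1x : (0:ℝ) < 1 + x := by linarith
  -- Gamma values positivity
  have hG1x : 0 < Real.Gamma (1 + x) := Real.Gamma_pos_of_pos (by linarith)
  -- log-convexity: Γ(1+x) ≥ (1+x)^(x-1)
  have hconv := Real.convexOn_log_Gamma.2 (Set.mem_Ioi.2 h1x)
      (Set.mem_Ioi.2 (show (0:ℝ) < 2 + x by linarith)) (le_of_lt hx0)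
      (by linarith : (0:ℝ) ≤ 1 - x) (by ring)
  have hcomb : x • (1 + x) + (1 - x) • (2 + x) = 2 := by
    simp only [smul_eq_mul]; ring
  rw [hcomb] at hconv
  have hG2 : Real.Gamma 2 = 1 := Real.Gamma_two
  have hG2x : Real.Gamma (2 + x) = (1 + x) * Real.Gamma (1 + x) := by
    have := Real.Gamma_add_one (show (1:ℝ) + x ≠ 0 by positivity)
    rw [show (2:ℝ) + x = 1 + x + 1 by ring, this]
  simp only [Function.comp_apply, hG2, hG2x, Real.log_one, smul_eq_mul] at hconv
  rw [Real.log_mul (by positivity) (ne_of_gt hG1x)] at hconv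
  have hlog : (x - 1) * Real.log (1 + x) ≤ Real.log (Real.Gamma (1 + x)) := by
    nlinarith [hconv]
  have hGlb : (1 + x) ^ (x - 1) ≤ Real.Gamma (1 + x) := by
    rw [← Real.exp_log hG1x, Real.rpow_def_of_pos h1x, mul_comm]
    exact Real.exp_le_exp.2 hlog
  -- AM-GM: 2^x * (1+x)^(1-x) ≤ 2x + (1-x)(1+x) ≤ 1 + 2x
  have hamgm : (2:ℝ) ^ x * (1 + x) ^ (1 - x) ≤ 1 + 2 * x := by
    have := Real.geom_mean_le_arith_mean2_weighted (le_of_lt hx0)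
      (by linarith : (0:ℝ) ≤ 1 - x) (by norm_num : (0:ℝ) ≤ 2) (le_of_lt h1x) (by ring)
    nlinarith [sq_nonneg x]
  -- hence 2^x ≤ (1+2x) * (1+x)^(x-1)
  have hkey : (2:ℝ) ^ x ≤ (1 + 2 * x) * (1 + x) ^ (x - 1) := by
    have hpos : (0:ℝ) < (1 + x) ^ (1 - x) := Real.rpow_pos_of_pos h1x _
    rw [← mul_le_mul_iff_of_pos_right hpos]
    calc (2:ℝ) ^ x * (1 + x) ^ (1 - x) ≤ 1 + 2 * x := hamgm
      _ = (1 + 2 * x) * (1 + x) ^ (x - 1) * (1 + x) ^ (1 - x) := by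
          rw [mul_assoc, ← Real.rpow_add h1x]
          norm_num
  -- assemble
  have hxne : x ≠ 0 := ne_of_gt hx0
  have hG : Real.Gamma (1 + x) = x * Real.Gamma x := by
    rw [add_comm]; exact Real.Gamma_add_one hxne
  have hrw1 : (1 - p) * (2 - p) * Real.Gamma ((1 - p) / 2)
      = 2 * ((1 + 2 * x) * Real.Gamma (1 + x)) := by
    rw [show (1-p)/2 = x from hxdef.symm, hG, hxdef]; ring
  have hrw2 : (2:ℝ) ^ ((3 - p) / 2) = 2 * (2:ℝ) ^ x := by
    rw [show (3 - p) / 2 = 1 + x by rw [hxdef]; ring, Real.rpow_add (by norm_num),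
      Real.rpow_one]
  rw [hrw1, hrw2, ge_iff_le]
  have hstep : (2:ℝ) ^ x ≤ (1 + 2 * x) * Real.Gamma (1 + x) := by
    calc (2:ℝ) ^ x ≤ (1 + 2 * x) * (1 + x) ^ (x - 1) := hkey
      _ ≤ (1 + 2 * x) * Real.Gamma (1 + x) := by
          apply mul_le_mul_of_nonneg_left hGlb (by linarith)
  linarith
end

section
/- For every integer m ≥ 1 and every p in (0,1), the quantity R_m(p) = (5/3)·(π^{-1/2} 2^{1/2-p})·(log(π(m+3/2)))^{1-p/2}/(π(m+3/2)) · (2^p + 2π^p ∑_{k=1}^m k^p) is strictly greater than 1. -/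
open Real Finset

set_option maxHeartbeats 1000000
set_option maxRecDepth 100000

lemma log_lb {x : ℝ} (hx : 0 < x) : 1 - 1/x ≤ Real.log x := by
  have h := Real.log_le_sub_one_of_pos (inv_pos.mpr hx)
  rw [Real.log_inv] at h
  rw [one_div]
  linarith

lemma sum_lb {p : ℝ} (hp0 : 0 ≤ p) (m : ℕ) :
    (m:ℝ)^(1+p) ≤ (1+p) * ∑ k ∈ Finset.Icc 1 m, (k:ℝ)^p := by
  induction m with
  | zero => simp [Real.zero_rpow (by linarith : (1:ℝ)+p ≠ 0)]
  | succ m ih =>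
    rw [Finset.sum_Icc_succ_top (Nat.le_add_left 1 m)]
    set M : ℝ := (m:ℝ) + 1 with hMdef
    have hM1 : 1 ≤ M := le_add_of_nonneg_left (Nat.cast_nonneg m)
    have hM0 : (0:ℝ) < M := by linarith
    have hber := one_add_mul_self_le_rpow_one_add
      (s := -(1/M)) (by rw [neg_le, neg_neg]; exact (div_le_one hM0).mpr hM1)
      (p := 1+p) (by linarith)
    have h1 : (1:ℝ) + -(1/M) = ((M-1)/M) := by field_simp; ring
    rw [h1] at hber
    have hdiv : ((M-1)/M)^(1+p) = (M-1)^(1+p) / M^(1+p) :=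
      Real.div_rpow (by linarith : (0:ℝ) ≤ M - 1) hM0.le _
    rw [hdiv] at hber
    have hMp : M^(1+p) = M * M^p := by
      rw [Real.rpow_add hM0, Real.rpow_one]
    have hMpos : (0:ℝ) < M^(1+p) := Real.rpow_pos_of_pos hM0 _
    have hkey : M^(1+p) - (1+p) * M^p ≤ (M-1)^(1+p) := by
      have := mul_le_mul_of_nonneg_right hber hMpos.le
      rw [div_mul_cancel₀ _ (ne_of_gt hMpos)] at this
      calc M^(1+p) - (1+p) * M^p = (1 + (1+p) * -(1/M)) * M^(1+p) := by
            rw [hMp]; field_simp; ring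
        _ ≤ (M-1)^(1+p) := this
    have hcast : ((m+1:ℕ):ℝ) = M := by push_cast; ring
    have hcast2 : (M - 1) = (m:ℝ) := by rw [hMdef]; ring
    rw [hcast, mul_add]
    rw [hcast2] at hkey
    linarith


lemma le_of_sq_le_sq' {x c : ℝ} (hx : 0 ≤ x) (hc : 0 ≤ c) (h : x^2 ≤ c^2) : x ≤ c := by
  nlinarith

lemma cube_lb {x : ℝ} (h : 2.7182818283 < x) : 20.0855 ≤ x*x*x := by nlinarith

lemma expM_aux {y E3 E M : ℝ} (hyu : y < 3.141593) (hE3 : 20.0855 ≤ E3)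
    (hE : 1 + (M-3) ≤ E) (hM : 3 ≤ M) (hy : 0 < y) : y * (M + 3/2) ≤ E3 * E := by
  have h1 : 20.0855*(M-2) ≤ E3*E := mul_le_mul hE3 (by linarith) (by linarith) (by linarith)
  have h2 : y*(M+3/2) ≤ 3.141593*(M+3/2) := mul_le_mul_of_nonneg_right hyu.le (by linarith)
  nlinarith

lemma hB_aux {c M : ℝ} (h : 9.86960 ≤ c) (hM : 3 ≤ M) : 29.557*M ≤ c*M^2 := by nlinarith

lemma fin3 {x y M : ℝ} (hx : 3.73352 ≤ x) (hy : y ≤ 5.568332) (hM : 3 ≤ M)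
    (hy0 : 0 ≤ y) : y*(M+3/2) < 10/3*x*M := by nlinarith

lemma case2 {p : ℝ} (hp0 : 0 < p) (hp1 : p < 1) :
    (5 / 3) * (π ^ (-(1:ℝ)/2) * (2:ℝ) ^ ((1:ℝ)/2 - p)) *
      (Real.log (π * ((2:ℕ) + 3/2))) ^ (1 - p/2) / (π * ((2:ℕ) + 3/2)) *
      ((2:ℝ) ^ p + 2 * π ^ p * ∑ k ∈ Finset.Icc (1:ℕ) 2, (k : ℝ) ^ p) > 1 := by
  have hπ : 0 < π := pi_pos
  have hπu : π < 3.141593 := pi_lt_d6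
  have hπl : 3.141592 < π := pi_gt_d6
  have hc : ((2:ℕ):ℝ) + 3/2 = 7/2 := by norm_num
  rw [hc]
  have hS : ∑ k ∈ Finset.Icc (1:ℕ) 2, (k : ℝ) ^ p = 1 + (2:ℝ)^p := by
    have h12 : Finset.Icc (1:ℕ) 2 = {1, 2} := rfl
    rw [h12, Finset.sum_insert (by norm_num), Finset.sum_singleton]
    push_cast
    rw [Real.one_rpow]
  rw [hS]
  set P : ℝ := π * (7/2) with hPdef
  clear_value P
  have hP : 0 < P := by rw [hPdef]; positivity
  set L : ℝ := Real.log P with hLdef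
  clear_value L
  have hL : (2.3518 : ℝ) ≤ L := by
    have h1 : P = 2^3 * (P / 8) := by ring
    rw [hLdef, h1, Real.log_mul (by norm_num) (by positivity), Real.log_pow]
    have hlb := log_lb (x := P/8) (by positivity)
    have hl2 := Real.log_two_gt_d9
    have hinv : 1/(P/8) ≤ 8/10.995572 := by
      rw [div_le_div_iff₀ (by positivity) (by norm_num), hPdef]
      linarith
    push_cast
    linarith
  have hL0 : (0:ℝ) < L := by linarith
  -- L ≤ π²/4
  have hLcond : L ≤ π^2/4 := by
    rw [hLdef]
    have hπ2 : (9.8696:ℝ) ≤ π^2 := by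
      have h := mul_le_mul hπl.le hπl.le (by norm_num) hπ.le
      calc (9.8696:ℝ) ≤ 3.141592*3.141592 := by norm_num
        _ ≤ π*π := h
        _ = π^2 := (sq π).symm
    have hx : (0.4674:ℝ) ≤ π^2/4 - 2 := by linarith
    have hPle : P ≤ Real.exp (π^2/4) := by
      have he2 : Real.exp (π^2/4) = (Real.exp 1 * Real.exp 1) *
          (Real.exp ((π^2/4-2)/2) * Real.exp ((π^2/4-2)/2)) := by
        rw [← Real.exp_add, ← Real.exp_add, ← Real.exp_add]; ring_nf
      have he1 := Real.exp_one_gt_d9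
      have hee : (7.389056:ℝ) ≤ Real.exp 1 * Real.exp 1 := by
        have h := mul_le_mul he1.le he1.le (by norm_num) (le_of_lt (Real.exp_pos 1))
        calc (7.389056:ℝ) ≤ 2.7182818283*2.7182818283 := by norm_num
          _ ≤ Real.exp 1 * Real.exp 1 := h
      have hx2 : (1.2337:ℝ) ≤ Real.exp ((π^2/4-2)/2) := by
        have := Real.add_one_le_exp ((π^2/4-2)/2)
        linarith
      have hxx : (1.52201:ℝ) ≤ Real.exp ((π^2/4-2)/2) * Real.exp ((π^2/4-2)/2) := by
        have h := mul_le_mul hx2 hx2 (by norm_num) (le_of_lt (Real.exp_pos _))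
        calc (1.52201:ℝ) ≤ 1.2337*1.2337 := by norm_num
          _ ≤ _ := h
      have : (11.2462:ℝ) ≤ Real.exp (π^2/4) := by
        rw [he2]
        have hprod := mul_le_mul hee hxx (by norm_num) (by positivity)
        linarith [hprod]
      rw [hPdef]
      linarith
    calc Real.log P ≤ Real.log (Real.exp (π^2/4)) := Real.log_le_log hP hPle
      _ = π^2/4 := Real.log_exp _
  -- atoms
  set r : ℝ := L^((1:ℝ)/2) with hrdef
  have hr0 : 0 < r := by rw [hrdef]; exact Real.rpow_pos_of_pos hL0 _
  have hr2 : r^2 = L := by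
    rw [hrdef, ← Real.rpow_natCast (L^((1:ℝ)/2)) 2, ← Real.rpow_mul hL0.le]
    norm_num
  clear_value r
  set s : ℝ := π^((1:ℝ)/2) with hsdef
  have hs0 : 0 < s := by rw [hsdef]; exact Real.rpow_pos_of_pos hπ _
  have hs2 : s^2 = π := by
    rw [hsdef, ← Real.rpow_natCast (π^((1:ℝ)/2)) 2, ← Real.rpow_mul hπ.le]
    norm_num
  set q : ℝ := (2:ℝ)^((1:ℝ)/2) with hqdef
  have hq0 : 0 < q := by rw [hqdef]; exact Real.rpow_pos_of_pos two_pos _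
  have hq2 : q^2 = 2 := by
    rw [hqdef, ← Real.rpow_natCast ((2:ℝ)^((1:ℝ)/2)) 2,
      ← Real.rpow_mul (by norm_num : (0:ℝ) ≤ 2)]
    norm_num
  set a : ℝ := (2:ℝ)^p with hadef
  have ha0 : 0 < a := by rw [hadef]; exact Real.rpow_pos_of_pos two_pos _
  set v : ℝ := π^p with hvdef
  have hv0 : 0 < v := by rw [hvdef]; exact Real.rpow_pos_of_pos hπ _
  set rp : ℝ := r^p with hrpdef
  have hrp0 : 0 < rp := by rw [hrpdef]; exact Real.rpow_pos_of_pos hr0 _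
  set t2 : ℝ := (2:ℝ)^((1:ℝ)/2 - p) with ht2def
  have ht20 : 0 < t2 := by rw [ht2def]; exact Real.rpow_pos_of_pos two_pos _
  set lp : ℝ := L^(1 - p/2) with hlpdef
  have hlp0 : 0 < lp := by rw [hlpdef]; exact Real.rpow_pos_of_pos hL0 _
  have i2 : t2 * a = q := by
    rw [ht2def, hadef, hqdef, ← Real.rpow_add two_pos]; ring_nf
  have i3 : lp * rp = L := by
    have h1 : rp = L^(p/2) := by
      rw [hrpdef, hrdef, ← Real.rpow_mul hL0.le]; ring_nf
    rw [hlpdef, h1, ← Real.rpow_add hL0]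
    norm_num
  have ipis : π ^ (-(1:ℝ)/2) * s = 1 := by
    rw [hsdef, ← Real.rpow_add hπ]; norm_num
  clear_value s q a v rp t2 lp
  -- bracket : a * rp ≤ v
  have h2r : 2 * r ≤ π := by
    apply le_of_sq_le_sq' (by positivity) hπ.le
    rw [mul_pow, hr2]
    linarith
  have hbase : (1:ℝ) ≤ π / (2 * r) := by
    rw [le_div_iff₀ (by positivity)]
    linarith
  have hbr : (1:ℝ) ≤ (π / (2*r))^p := by
    calc (1:ℝ) = (1:ℝ)^p := (Real.one_rpow p).symm
      _ ≤ (π / (2*r))^p := Real.rpow_le_rpow (by norm_num) hbase hp0.le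
  have hbr' : a * rp ≤ v := by
    have hd : (π / (2*r))^p = v/(a * rp) := by
      rw [Real.div_rpow hπ.le (by positivity),
          Real.mul_rpow (by norm_num : (0:ℝ) ≤ 2) hr0.le, hvdef, hadef, hrpdef]
    rw [hd, le_div_iff₀ (by positivity)] at hbr
    linarith
  -- assembly
  rw [gt_iff_lt, show (5 / 3) * (π ^ (-(1:ℝ)/2) * t2) * lp / P * (a + 2 * v * (1 + a))
      = (5 / 3) * (π ^ (-(1:ℝ)/2) * t2) * lp * (a + 2 * v * (1 + a)) / P from by ring,
    lt_div_iff₀ hP]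
  have hip0 : 0 < π ^ (-(1:ℝ)/2) := Real.rpow_pos_of_pos hπ _
  have ha1 : (1:ℝ) ≤ a := by
    rw [hadef]
    calc (1:ℝ) = (1:ℝ)^p := (Real.one_rpow p).symm
      _ ≤ (2:ℝ)^p := Real.rpow_le_rpow (by norm_num) (by norm_num) hp0.le
  have step1 : (5/3) * (π ^ (-(1:ℝ)/2) * q) * L * 4
      ≤ (5 / 3) * (π ^ (-(1:ℝ)/2) * t2) * lp * (a + 2 * v * (1 + a)) := by
    calc (5/3) * (π ^ (-(1:ℝ)/2) * q) * L * 4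
        = (5/3) * π ^ (-(1:ℝ)/2) * (t2 * a) * (lp * rp) * 4 := by rw [i2, i3]; ring
      _ = (5 / 3) * (π ^ (-(1:ℝ)/2) * t2) * lp * (4 * (a * rp)) := by ring
      _ ≤ (5 / 3) * (π ^ (-(1:ℝ)/2) * t2) * lp * (4 * v) := by
          apply mul_le_mul_of_nonneg_left _ (by positivity)
          linarith
      _ ≤ (5 / 3) * (π ^ (-(1:ℝ)/2) * t2) * lp * (a + 2 * v * (1 + a)) := by
          apply mul_le_mul_of_nonneg_left _ (by positivity)
          have hva : v * 1 ≤ v * a := mul_le_mul_of_nonneg_left ha1 hv0.le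
          linarith
  refine lt_of_lt_of_le ?_ step1
  have hsu : s ≤ 1.772454 :=
    le_of_sq_le_sq' hs0.le (by norm_num) (by rw [hs2]; linarith)
  have hql : (1.414213:ℝ) ≤ q :=
    le_of_sq_le_sq' (by norm_num) hq0.le (by rw [hq2]; norm_num)
  have hip : π ^ (-(1:ℝ)/2) = 1/s := by
    field_simp
    linarith [ipis]
  rw [hip]
  rw [show (5:ℝ)/3 * (1/s * q) * L * 4 = (20/3) * (q * L) / s from by ring,
    lt_div_iff₀ hs0]
  have hqL : (3.3258:ℝ) ≤ q * L := by
    calc (3.3258:ℝ) ≤ 1.414213 * 2.3518 := by norm_num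
      _ ≤ q * L := mul_le_mul hql hL (by norm_num) (le_of_lt hq0)
  have hsπ : s * π ≤ 5.568332 := by
    calc s * π ≤ 1.772454 * 3.141593 :=
        mul_le_mul hsu hπu.le hπ.le (by norm_num)
      _ ≤ 5.568332 := by norm_num
  have hPs : 1 * P * s = s * π * (7/2) := by rw [hPdef]; ring
  rw [hPs]
  linarith

lemma pow8_ub {y : ℝ} (h0 : 0 ≤ y) (h : y ≤ 1.5707965) : y^8 ≤ 37.0646110 := by
  have h2 : y^2 ≤ 2.4674017 := by nlinarith [mul_self_le_mul_self h0 h]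
  have h4 : y^4 ≤ 6.0880712 := by nlinarith [mul_self_le_mul_self (sq_nonneg y) h2]
  nlinarith [mul_self_le_mul_self (pow_nonneg h0 4) h4]

lemma case1 {p : ℝ} (hp0 : 0 < p) (hp1 : p < 1) :
    (5 / 3) * (π ^ (-(1:ℝ)/2) * (2:ℝ) ^ ((1:ℝ)/2 - p)) *
      (Real.log (π * ((1:ℕ) + 3/2))) ^ (1 - p/2) / (π * ((1:ℕ) + 3/2)) *
      ((2:ℝ) ^ p + 2 * π ^ p * ∑ k ∈ Finset.Icc (1:ℕ) 1, (k : ℝ) ^ p) > 1 := by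
  have hπ : 0 < π := pi_pos
  have hπu : π < 3.141593 := pi_lt_d6
  have hπl : 3.141592 < π := pi_gt_d6
  have h1π : (0:ℝ) < 1 + π := by linarith
  have hl2l := Real.log_two_gt_d9
  have hl2u := Real.log_two_lt_d9
  have hc : ((1:ℕ):ℝ) + 3/2 = 5/2 := by norm_num
  rw [hc]
  have hS : ∑ k ∈ Finset.Icc (1:ℕ) 1, (k : ℝ) ^ p = 1 := by
    rw [Finset.Icc_self, Finset.sum_singleton]
    push_cast
    exact Real.one_rpow p
  rw [hS]
  set P : ℝ := π * (5/2) with hPdef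
  clear_value P
  have hP : 0 < P := by rw [hPdef]; positivity
  set L : ℝ := Real.log P with hLdef
  clear_value L
  have hL : (2.06084 : ℝ) ≤ L := by
    have h1 : P = 2^3 * (P / 8) := by ring
    rw [hLdef, h1, Real.log_mul (by norm_num) (by positivity), Real.log_pow]
    have hlb := log_lb (x := P/8) (by positivity)
    have hinv : 1/(P/8) ≤ 8/7.85398 := by
      rw [div_le_div_iff₀ (by positivity) (by norm_num), hPdef]
      linarith
    push_cast
    linarith
  have hL0 : (0:ℝ) < L := by linarith
  have hL2 : (2:ℝ) ≤ L := by linarith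
  -- bound b = log π - log 2
  have hbpos : 0 ≤ Real.log π - Real.log 2 := by
    have := Real.log_le_log two_pos (by linarith : (2:ℝ) ≤ π)
    linarith
  have hb : Real.log π - Real.log 2 ≤ 0.4530007 := by
    have h8 : Real.log ((π/2)^8) = 8*(Real.log π - Real.log 2) := by
      rw [Real.log_pow, Real.log_div hπ.ne' two_ne_zero]
      push_cast
      ring
    have hsplit : (π/2)^8 = 2^5 * ((π/2)^8/32) := by ring
    have h32 : Real.log ((π/2)^8) = 5*Real.log 2 + Real.log ((π/2)^8/32) := by
      rw [hsplit, Real.log_mul (by norm_num) (by positivity), Real.log_pow]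
      push_cast
      ring
    have hup : (π/2)^8 ≤ 37.0646110 := pow8_ub (by positivity) (by linarith)
    have hlog : Real.log ((π/2)^8/32) ≤ 0.1582692 := by
      have := Real.log_le_sub_one_of_pos (x := (π/2)^8/32) (by positivity)
      linarith
    linarith [h8, h32]
  have hw2 : π/(1+π) ≤ 0.75855 := by
    rw [div_le_iff₀ h1π]
    linarith
  have hw2pos : 0 ≤ π/(1+π) := by positivity
  have claimA : 0 ≤ Real.log 2/2 + (π/(1+π))*Real.log (2/π) := by
    rw [Real.log_div two_ne_zero hπ.ne']
    have h1 : (π/(1+π))*(Real.log π - Real.log 2) ≤ 0.75855*0.4530007 :=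
      mul_le_mul hw2 hb hbpos (by norm_num)
    linarith [h1]
  -- atoms
  set r : ℝ := L^((1:ℝ)/2) with hrdef
  clear_value r
  have hr0 : 0 < r := by rw [hrdef]; exact Real.rpow_pos_of_pos hL0 _
  have hr2 : r^2 = L := by
    rw [hrdef, ← Real.rpow_natCast (L^((1:ℝ)/2)) 2, ← Real.rpow_mul hL0.le]
    norm_num
  set s : ℝ := π^((1:ℝ)/2) with hsdef
  clear_value s
  have hs0 : 0 < s := by rw [hsdef]; exact Real.rpow_pos_of_pos hπ _
  have hs2 : s^2 = π := by
    rw [hsdef, ← Real.rpow_natCast (π^((1:ℝ)/2)) 2, ← Real.rpow_mul hπ.le]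
    norm_num
  set q : ℝ := (2:ℝ)^((1:ℝ)/2) with hqdef
  clear_value q
  have hq0 : 0 < q := by rw [hqdef]; exact Real.rpow_pos_of_pos two_pos _
  have hq2 : q^2 = 2 := by
    rw [hqdef, ← Real.rpow_natCast ((2:ℝ)^((1:ℝ)/2)) 2,
      ← Real.rpow_mul (by norm_num : (0:ℝ) ≤ 2)]
    norm_num
  set a : ℝ := (2:ℝ)^p with hadef
  clear_value a
  have ha0 : 0 < a := by rw [hadef]; exact Real.rpow_pos_of_pos two_pos _
  set v : ℝ := π^p with hvdef
  clear_value v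
  have hv0 : 0 < v := by rw [hvdef]; exact Real.rpow_pos_of_pos hπ _
  set t2 : ℝ := (2:ℝ)^((1:ℝ)/2 - p) with ht2def
  clear_value t2
  have ht20 : 0 < t2 := by rw [ht2def]; exact Real.rpow_pos_of_pos two_pos _
  set lp : ℝ := L^(1 - p/2) with hlpdef
  clear_value lp
  have hlp0 : 0 < lp := by rw [hlpdef]; exact Real.rpow_pos_of_pos hL0 _
  set lt : ℝ := L^((1-p)/2) with hltdef
  clear_value lt
  have hlt0 : 0 < lt := by rw [hltdef]; exact Real.rpow_pos_of_pos hL0 _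
  set x : ℝ := (2/π)^(1-p) with hxdef
  clear_value x
  have hx0 : 0 < x := by
    rw [hxdef]; exact Real.rpow_pos_of_pos (by positivity) _
  set e2h : ℝ := (2:ℝ)^((1-p)/2) with he2hdef
  clear_value e2h
  have he2h0 : 0 < e2h := by rw [he2hdef]; exact Real.rpow_pos_of_pos two_pos _
  set xw : ℝ := x^(π/(1+π)) with hxwdef
  clear_value xw
  have hxw0 : 0 < xw := by rw [hxwdef]; exact Real.rpow_pos_of_pos hx0 _
  -- identities
  have i1 : lp = r * lt := by
    rw [hlpdef, hrdef, hltdef, show (1:ℝ) - p/2 = 1/2 + (1-p)/2 by ring,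
      Real.rpow_add hL0]
  have i2 : t2 * a = q := by
    rw [ht2def, hadef, hqdef, ← Real.rpow_add two_pos]; ring_nf
  have ipis : π ^ (-(1:ℝ)/2) * s = 1 := by
    rw [hsdef, ← Real.rpow_add hπ]; norm_num
  have hax : a + 2*v*1 = a * (1 + π * x) := by
    have h2p : (0:ℝ) < (2:ℝ)^p := Real.rpow_pos_of_pos two_pos p
    have hπp : (0:ℝ) < π^p := Real.rpow_pos_of_pos hπ p
    have hpx : π * (a * x) = 2 * v := by
      rw [hadef, hxdef, hvdef, Real.div_rpow (by norm_num : (0:ℝ) ≤ 2) hπ.le,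
        Real.rpow_sub two_pos, Real.rpow_sub hπ, Real.rpow_one, Real.rpow_one]
      field_simp
    linarith [hpx]
  -- lt ≥ e2h
  have hlte : e2h ≤ lt := by
    rw [he2hdef, hltdef]
    exact Real.rpow_le_rpow (by norm_num) hL2 (by linarith)
  -- AM-GM
  have geom := Real.geom_mean_le_arith_mean2_weighted
    (w₁ := 1/(1+π)) (w₂ := π/(1+π)) (p₁ := 1) (p₂ := x)
    (by positivity) hw2pos zero_le_one hx0.le (by field_simp)
  rw [Real.one_rpow, one_mul, ← hxwdef] at geom
  have amgm : (1+π) * xw ≤ 1 + π * x := by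
    have h2 := mul_le_mul_of_nonneg_left geom h1π.le
    have heq : (1+π)*(1/(1+π)*1 + π/(1+π)*x) = 1 + π*x := by
      field_simp
    rw [heq] at h2
    exact h2
  -- key : 1 ≤ e2h * xw
  have hkey : (1:ℝ) ≤ e2h * xw := by
    have hd1 : e2h = Real.exp (Real.log 2 * ((1-p)/2)) := by
      rw [he2hdef, Real.rpow_def_of_pos two_pos]
    have hd2 : xw = Real.exp (Real.log (2/π) * ((1-p)*(π/(1+π)))) := by
      rw [hxwdef, hxdef, ← Real.rpow_mul (by positivity : (0:ℝ) ≤ 2/π),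
        Real.rpow_def_of_pos (by positivity)]
    rw [hd1, hd2, ← Real.exp_add]
    have hnn : 0 ≤ Real.log 2 * ((1-p)/2) + Real.log (2/π) * ((1-p)*(π/(1+π))) := by
      have heq : Real.log 2 * ((1-p)/2) + Real.log (2/π) * ((1-p)*(π/(1+π)))
          = (1-p) * (Real.log 2/2 + (π/(1+π))*Real.log (2/π)) := by ring
      rw [heq]
      exact mul_nonneg (by linarith) claimA
    calc (1:ℝ) = Real.exp 0 := Real.exp_zero.symm
      _ ≤ _ := Real.exp_le_exp.mpr hnn
  -- key2
  have hkey2 : (1+π) ≤ lt * (1 + π*x) := by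
    have c1 : (1+π) * 1 ≤ (1+π) * (e2h*xw) := mul_le_mul_of_nonneg_left hkey h1π.le
    have c2 : e2h*((1+π)*xw) ≤ e2h*(1 + π*x) := mul_le_mul_of_nonneg_left amgm he2h0.le
    have c3 : e2h*(1 + π*x) ≤ lt*(1 + π*x) :=
      mul_le_mul_of_nonneg_right hlte (by positivity)
    linarith [c1, c2, c3]
  -- assembly
  rw [gt_iff_lt, show (5 / 3) * (π ^ (-(1:ℝ)/2) * t2) * lp / P * (a + 2 * v * 1)
      = (5 / 3) * (π ^ (-(1:ℝ)/2) * t2) * lp * (a + 2 * v * 1) / P from by ring,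
    lt_div_iff₀ hP]
  have hip0 : 0 < π ^ (-(1:ℝ)/2) := Real.rpow_pos_of_pos hπ _
  have step1 : (5/3) * (π ^ (-(1:ℝ)/2) * q) * r * (1+π)
      ≤ (5 / 3) * (π ^ (-(1:ℝ)/2) * t2) * lp * (a + 2 * v * 1) := by
    rw [hax, i1]
    calc (5/3) * (π ^ (-(1:ℝ)/2) * q) * r * (1+π)
        = (5/3) * (π ^ (-(1:ℝ)/2) * (t2 * a)) * r * (1+π) := by rw [i2]
      _ = (5/3) * π ^ (-(1:ℝ)/2) * t2 * a * r * (1+π) := by ring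
      _ ≤ (5/3) * π ^ (-(1:ℝ)/2) * t2 * a * r * (lt * (1 + π*x)) := by
          apply mul_le_mul_of_nonneg_left hkey2 (by positivity)
      _ = (5 / 3) * (π ^ (-(1:ℝ)/2) * t2) * (r * lt) * (a * (1 + π * x)) := by ring
  refine lt_of_lt_of_le ?_ step1
  have hsu : s ≤ 1.772454 :=
    le_of_sq_le_sq' hs0.le (by norm_num) (by rw [hs2]; linarith)
  have hql : (1.414213:ℝ) ≤ q :=
    le_of_sq_le_sq' (by norm_num) hq0.le (by rw [hq2]; norm_num)
  have hrl : (1.43556:ℝ) ≤ r :=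
    le_of_sq_le_sq' (by norm_num) hr0.le (by rw [hr2]; linarith [hL])
  have hip : π ^ (-(1:ℝ)/2) = 1/s := by
    rw [eq_div_iff hs0.ne']
    exact ipis
  rw [hip]
  rw [show (5:ℝ)/3 * (1/s * q) * r * (1+π) = (5/3) * ((q * r) * (1+π)) / s from by ring,
    lt_div_iff₀ hs0]
  have hqr : (2.030175:ℝ) ≤ q * r := by
    calc (2.030175:ℝ) ≤ 1.414213 * 1.43556 := by norm_num
      _ ≤ q * r := mul_le_mul hql hrl (by norm_num) (le_of_lt hq0)
  have hqr1 : (8.40815:ℝ) ≤ (q*r)*(1+π) := by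
    calc (8.40815:ℝ) ≤ 2.030175 * 4.141592 := by norm_num
      _ ≤ (q*r)*(1+π) := mul_le_mul hqr (by linarith) (by norm_num) (by positivity)
  have hsπ : s * π ≤ 5.568332 := by
    calc s * π ≤ 1.772454 * 3.141593 :=
        mul_le_mul hsu hπu.le hπ.le (by norm_num)
      _ ≤ 5.568332 := by norm_num
  have hPs : 1 * P * s = s * π * (5/2) := by rw [hPdef]; ring
  rw [hPs]
  linarith

lemma case3 {m : ℕ} (hm : 3 ≤ m) {p : ℝ} (hp0 : 0 < p) (hp1 : p < 1) :
    (5 / 3) * (π ^ (-(1:ℝ)/2) * (2:ℝ) ^ ((1:ℝ)/2 - p)) *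
      (Real.log (π * (m + 3/2))) ^ (1 - p/2) / (π * (m + 3/2)) *
      ((2:ℝ) ^ p + 2 * π ^ p * ∑ k ∈ Finset.Icc 1 m, (k : ℝ) ^ p) > 1 := by
  have hπ : 0 < π := pi_pos
  have hπu : π < 3.141593 := pi_lt_d6
  have hπl : 3.141592 < π := pi_gt_d6
  set M : ℝ := (m:ℝ) with hMdef
  clear_value M
  have hM3 : 3 ≤ M := by rw [hMdef]; exact_mod_cast hm
  have hM0 : 0 < M := by linarith
  set P : ℝ := π * (M + 3/2) with hPdef
  clear_value P
  have hP : 0 < P := by rw [hPdef]; positivity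
  set L : ℝ := Real.log P with hLdef
  clear_value L
  -- L lower bound
  have hL3 : Real.log (π * (9/2)) ≤ L := by
    rw [hLdef]
    apply Real.log_le_log (by positivity)
    rw [hPdef]
    exact mul_le_mul_of_nonneg_left (by linarith) hπ.le
  have hL3v : (2.64 : ℝ) ≤ Real.log (π * (9/2)) := by
    have h1 : π * (9/2) = 2^4 * (π * (9/2) / 16) := by ring
    rw [h1, Real.log_mul (by norm_num) (by positivity), Real.log_pow]
    have hlb := log_lb (x := π * (9/2)/16) (by positivity)
    have hl2 := Real.log_two_gt_d9
    have hinv : 1/(π * (9/2)/16) ≤ 16/14.137164 := by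
      rw [div_le_div_iff₀ (by positivity) (by norm_num)]
      linarith
    push_cast
    linarith
  have hL : (2.64:ℝ) ≤ L := le_trans hL3v hL3
  have hL0 : (0:ℝ) < L := by linarith
  -- L ≤ M
  have hPle : P ≤ Real.exp M := by
    have h3 : Real.exp M = Real.exp 3 * Real.exp (M - 3) := by
      rw [← Real.exp_add]; ring_nf
    have he1 := Real.exp_one_gt_d9
    have he3 : (20.0855 : ℝ) ≤ Real.exp 3 := by
      have h33 : Real.exp 3 = Real.exp 1 * Real.exp 1 * Real.exp 1 := by
        rw [← Real.exp_add, ← Real.exp_add]; norm_num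
      rw [h33]; exact cube_lb he1
    have hex : (1:ℝ) + (M - 3) ≤ Real.exp (M-3) := by
      linarith [Real.add_one_le_exp (M-3)]
    rw [hPdef, h3]
    exact expM_aux hπu he3 hex hM3 hπ
  have hLM : L ≤ M := by
    calc L = Real.log P := hLdef
      _ ≤ Real.log (Real.exp M) := Real.log_le_log hP hPle
      _ = M := Real.log_exp M
  -- atoms
  set r : ℝ := L^((1:ℝ)/2) with hrdef
  clear_value r
  have hr0 : 0 < r := by rw [hrdef]; exact Real.rpow_pos_of_pos hL0 _
  have hr2 : r^2 = L := by
    rw [hrdef, ← Real.rpow_natCast (L^((1:ℝ)/2)) 2, ← Real.rpow_mul hL0.le]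
    norm_num
  set s : ℝ := π^((1:ℝ)/2) with hsdef
  clear_value s
  have hs0 : 0 < s := by rw [hsdef]; exact Real.rpow_pos_of_pos hπ _
  have hs2 : s^2 = π := by
    rw [hsdef, ← Real.rpow_natCast (π^((1:ℝ)/2)) 2, ← Real.rpow_mul hπ.le]
    norm_num
  set q : ℝ := (2:ℝ)^((1:ℝ)/2) with hqdef
  clear_value q
  have hq0 : 0 < q := by rw [hqdef]; exact Real.rpow_pos_of_pos two_pos _
  have hq2 : q^2 = 2 := by
    rw [hqdef, ← Real.rpow_natCast ((2:ℝ)^((1:ℝ)/2)) 2,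
      ← Real.rpow_mul (by norm_num : (0:ℝ) ≤ 2)]
    norm_num
  set a : ℝ := (2:ℝ)^p with hadef
  clear_value a
  have ha0 : 0 < a := by rw [hadef]; exact Real.rpow_pos_of_pos two_pos _
  set v : ℝ := π^p with hvdef
  clear_value v
  have hv0 : 0 < v := by rw [hvdef]; exact Real.rpow_pos_of_pos hπ _
  set w : ℝ := M^p with hwdef
  clear_value w
  have hw0 : 0 < w := by rw [hwdef]; exact Real.rpow_pos_of_pos hM0 _
  set rp : ℝ := r^p with hrpdef
  clear_value rp
  have hrp0 : 0 < rp := by rw [hrpdef]; exact Real.rpow_pos_of_pos hr0 _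
  set t2 : ℝ := (2:ℝ)^((1:ℝ)/2 - p) with ht2def
  clear_value t2
  have ht20 : 0 < t2 := by rw [ht2def]; exact Real.rpow_pos_of_pos two_pos _
  set lp : ℝ := L^(1 - p/2) with hlpdef
  clear_value lp
  have hlp0 : 0 < lp := by rw [hlpdef]; exact Real.rpow_pos_of_pos hL0 _
  -- identities
  have i2 : t2 * a = q := by
    rw [ht2def, hadef, hqdef, ← Real.rpow_add two_pos]; ring_nf
  have i3 : lp * rp = L := by
    have h1 : rp = L^(p/2) := by
      rw [hrpdef, hrdef, ← Real.rpow_mul hL0.le]; ring_nf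
    rw [hlpdef, h1, ← Real.rpow_add hL0]
    norm_num
  have ipis : π ^ (-(1:ℝ)/2) * s = 1 := by
    rw [hsdef, ← Real.rpow_add hπ]; norm_num
  -- condition 2 e r ≤ π M
  have hcond : 2 * Real.exp 1 * r ≤ π * M := by
    have he : Real.exp 1 ≤ 2.7183 := by linarith [Real.exp_one_lt_d9]
    have h2e : 2*Real.exp 1 ≤ 5.4366 := by linarith
    have h4e2 : (2*Real.exp 1)^2 ≤ 29.557 := by
      have h := mul_le_mul h2e h2e (by positivity) (by norm_num)
      calc (2*Real.exp 1)^2 = (2*Real.exp 1)*(2*Real.exp 1) := sq (2*Real.exp 1)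
        _ ≤ 5.4366*5.4366 := h
        _ ≤ 29.557 := by norm_num
    have hπ2 : (9.86960:ℝ) ≤ π^2 := by
      have h := mul_le_mul hπl.le hπl.le (by norm_num) hπ.le
      calc (9.86960:ℝ) ≤ 3.141592*3.141592 := by norm_num
        _ ≤ π*π := h
        _ = π^2 := (sq π).symm
    have hsq : (2 * Real.exp 1 * r)^2 ≤ (π * M)^2 := by
      have e1 : (2 * Real.exp 1 * r)^2 = (2*Real.exp 1)^2 * L := by rw [mul_pow, hr2]
      have e2 : (π * M)^2 = π^2 * M^2 := by ring
      rw [e1, e2]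
      have hA : (2*Real.exp 1)^2 * L ≤ 29.557 * M :=
        le_trans (mul_le_mul_of_nonneg_right h4e2 hL0.le) (by linarith)
      have hB : (29.557:ℝ) * M ≤ π^2 * M^2 := hB_aux hπ2 hM3
      linarith
    have := Real.sqrt_le_sqrt hsq
    rwa [Real.sqrt_sq (by positivity), Real.sqrt_sq (by positivity)] at this
  -- bracket
  have hbase : Real.exp 1 ≤ π * M / (2 * r) := by
    rw [le_div_iff₀ (by positivity)]
    linarith
  have hbr : (1+p) ≤ (π * M / (2*r))^p := by
    calc (1:ℝ)+p ≤ Real.exp p := by linarith [Real.add_one_le_exp p]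
      _ = (Real.exp 1)^p := (Real.exp_one_rpow p).symm
      _ ≤ (π * M / (2*r))^p := Real.rpow_le_rpow (Real.exp_pos 1).le hbase hp0.le
  have hbr' : (1+p) * (a * rp) ≤ v * w := by
    have hd : (π * M / (2*r))^p = (v * w)/(a * rp) := by
      rw [Real.div_rpow (by positivity) (by positivity),
          Real.mul_rpow hπ.le hM0.le, Real.mul_rpow (by norm_num : (0:ℝ) ≤ 2) hr0.le,
          hvdef, hwdef, hadef, hrpdef]
    rw [hd, le_div_iff₀ (by positivity)] at hbr
    linarith
  -- sum bound
  have hsum := sum_lb hp0.le m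
  rw [← hMdef] at hsum
  have hMw : M^(1+p) = M * w := by
    rw [hwdef, Real.rpow_add hM0, Real.rpow_one]
  rw [hMw] at hsum
  set S : ℝ := ∑ k ∈ Finset.Icc 1 m, (k:ℝ)^p with hSdef
  clear_value S
  have hS0 : 0 < S := by
    have h := lt_of_lt_of_le (mul_pos hM0 hw0) hsum
    rcases mul_pos_iff.mp h with ⟨_, h2⟩ | ⟨h1, _⟩
    · exact h2
    · linarith
  have hvS : a * rp * M ≤ v * S := by
    have h1 : v * (M * w) ≤ v * ((1+p) * S) := mul_le_mul_of_nonneg_left hsum hv0.le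
    have h2 : M * ((1+p) * (a * rp)) ≤ M * (v * w) := mul_le_mul_of_nonneg_left hbr' hM0.le
    have hp1p : (0:ℝ) < 1 + p := by linarith
    have h3 : (1+p) * (a*rp*M) ≤ (1+p) * (v*S) := by linarith [h1, h2]
    exact le_of_mul_le_mul_left h3 hp1p
  -- assembly
  rw [gt_iff_lt, show (5 / 3) * (π ^ (-(1:ℝ)/2) * t2) * lp / P * (a + 2 * v * S)
      = (5 / 3) * (π ^ (-(1:ℝ)/2) * t2) * lp * (a + 2 * v * S) / P from by ring,
    lt_div_iff₀ hP]
  have hip0 : 0 < π ^ (-(1:ℝ)/2) := Real.rpow_pos_of_pos hπ _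
  have step1 : (5/3) * (π ^ (-(1:ℝ)/2) * q) * L * (2 * M)
      ≤ (5 / 3) * (π ^ (-(1:ℝ)/2) * t2) * lp * (a + 2 * v * S) := by
    calc (5/3) * (π ^ (-(1:ℝ)/2) * q) * L * (2 * M)
        = (5/3) * π ^ (-(1:ℝ)/2) * (t2 * a) * (lp * rp) * (2 * M) := by rw [i2, i3]; ring
      _ = (5 / 3) * (π ^ (-(1:ℝ)/2) * t2) * lp * (2 * (a * rp * M)) := by ring
      _ ≤ (5 / 3) * (π ^ (-(1:ℝ)/2) * t2) * lp * (2 * (v * S)) := by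
          apply mul_le_mul_of_nonneg_left _ (by positivity)
          linarith
      _ ≤ (5 / 3) * (π ^ (-(1:ℝ)/2) * t2) * lp * (a + 2 * v * S) := by
          apply mul_le_mul_of_nonneg_left _ (by positivity)
          linarith
  refine lt_of_lt_of_le ?_ step1
  -- final numeric
  have hsu : s ≤ 1.772454 :=
    le_of_sq_le_sq' hs0.le (by norm_num) (by rw [hs2]; linarith)
  have hql : (1.414213:ℝ) ≤ q :=
    le_of_sq_le_sq' (by norm_num) hq0.le (by rw [hq2]; norm_num)
  have hip : π ^ (-(1:ℝ)/2) = 1/s := by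
    field_simp
    linarith [ipis]
  rw [hip]
  rw [show (5:ℝ)/3 * (1/s * q) * L * (2*M) = (10/3) * (q * L) * M / s from by ring,
    lt_div_iff₀ hs0]
  have hqL : (3.73352:ℝ) ≤ q * L := by
    calc (3.73352:ℝ) ≤ 1.414213 * 2.64 := by norm_num
      _ ≤ q * L := mul_le_mul hql hL (by norm_num) (le_of_lt hq0)
  have hsπ : s * π ≤ 5.568332 := by
    calc s * π ≤ 1.772454 * 3.141593 :=
        mul_le_mul hsu hπu.le hπ.le (by norm_num)
      _ ≤ 5.568332 := by norm_num
  have hPs : 1 * P * s = s * π * (M + 3/2) := by rw [hPdef]; ring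
  rw [hPs]
  linarith [fin3 hqL hsπ hM3 (by positivity : (0:ℝ) ≤ s * π)]

theorem Rm_gt_one {m : ℕ} (hm : 1 ≤ m) {p : ℝ} (hp : p ∈ Set.Ioo (0:ℝ) 1) :
    (5 / 3) * (π ^ (-(1:ℝ)/2) * (2:ℝ) ^ ((1:ℝ)/2 - p)) *
      (Real.log (π * (m + 3/2))) ^ (1 - p/2) / (π * (m + 3/2)) *
      ((2:ℝ) ^ p + 2 * π ^ p * ∑ k ∈ Finset.Icc 1 m, (k : ℝ) ^ p) > 1 := by
  obtain ⟨hp0, hp1⟩ := hp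
  obtain rfl | rfl | h3 : m = 1 ∨ m = 2 ∨ 3 ≤ m := by omega
  · exact case1 hp0 hp1
  · exact case2 hp0 hp1
  · exact case3 h3 hp0 hp1
end

section
/- For every fixed x in (0,1), the function p ↦ ((1+x)/2)^{2-p} − ((1-x)/2)^{2-p} + x·((3-x^2)/2)^{-p/2} is strictly concave and decreasing on [0,2]. -/
open Real Set

lemma log_ge_sub {t : ℝ} (ht : 0 < t) : 1 - 1/t ≤ Real.log t := by
  have h := Real.log_le_sub_one_of_pos (show (0:ℝ) < 1/t by positivity)
  rw [one_div, Real.log_inv] at h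
  rw [one_div]
  linarith

lemma neg_log_le_inv_e {b : ℝ} (hb : 0 < b) : -Real.log b ≤ 1/(Real.exp 1 * b) := by
  have h1 : (0:ℝ) < 1/(Real.exp 1 * b) := by positivity
  have h := Real.log_le_sub_one_of_pos h1
  rw [one_div, Real.log_inv, Real.log_mul (Real.exp_pos 1).ne' hb.ne', Real.log_exp] at h
  rw [one_div]
  linarith

lemma log3_lb : (1.0264805:ℝ) ≤ Real.log 3 := by
  have h : Real.log 3 = Real.log 2 + Real.log (3/2) := by
    rw [← Real.log_mul (by norm_num) (by norm_num)]; norm_num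
  have h2 := Real.log_two_gt_d9
  have h3 : (1:ℝ) - 1/(3/2) ≤ Real.log (3/2) := log_ge_sub (by norm_num)
  rw [h]; norm_num at h3 ⊢; linarith

lemma log3_ub : Real.log 3 ≤ (1.10222078:ℝ) := by
  have h : Real.log 9 = 3 * Real.log 2 + Real.log (9/8) := by
    rw [show (9:ℝ) = 8 * (9/8) by norm_num, Real.log_mul (by norm_num) (by norm_num),
      show (8:ℝ) = 2^3 by norm_num, Real.log_pow]
    push_cast; ring
  have h9 : Real.log 9 = 2 * Real.log 3 := by
    rw [show (9:ℝ) = 3^2 by norm_num, Real.log_pow]; push_cast; ring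
  have h2 := Real.log_two_lt_d9
  have h3 : Real.log (9/8) ≤ 9/8 - 1 := Real.log_le_sub_one_of_pos (by norm_num)
  nlinarith

lemma log5_lb : (1.586:ℝ) ≤ Real.log 5 := by
  have h : Real.log 5 = 2 * Real.log 2 + Real.log (5/4) := by
    rw [show (5:ℝ) = 2^2 * (5/4) by norm_num, Real.log_mul (by norm_num) (by norm_num),
      Real.log_pow]
    push_cast; ring
  have h2 := Real.log_two_gt_d9
  have h3 : (1:ℝ) - 1/(5/4) ≤ Real.log (5/4) := log_ge_sub (by norm_num)
  norm_num at h3; linarith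

lemma log10_lb : (2.2964:ℝ) ≤ Real.log 10 := by
  have h : Real.log 10 = 3 * Real.log 2 + (Real.log (17/16) + Real.log (18/17) +
      Real.log (19/18) + Real.log (20/19)) := by
    rw [show (10:ℝ) = 2^3 * ((17/16) * (18/17) * (19/18) * (20/19)) by norm_num,
      Real.log_mul (by norm_num) (by norm_num), Real.log_pow,
      Real.log_mul (by norm_num) (by norm_num), Real.log_mul (by norm_num) (by norm_num),
      Real.log_mul (by norm_num) (by norm_num)]
    push_cast; ring
  have h2 := Real.log_two_gt_d9
  have b1 : (1:ℝ) - 1/(17/16) ≤ Real.log (17/16) := log_ge_sub (by norm_num)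
  have b2 : (1:ℝ) - 1/(18/17) ≤ Real.log (18/17) := log_ge_sub (by norm_num)
  have b3 : (1:ℝ) - 1/(19/18) ≤ Real.log (19/18) := log_ge_sub (by norm_num)
  have b4 : (1:ℝ) - 1/(20/19) ≤ Real.log (20/19) := log_ge_sub (by norm_num)
  norm_num at b1 b2 b3 b4; linarith


noncomputable def vf (b : ℝ) : ℝ :=
  b^2*(Real.log b)^2 - (1-b)^2*(Real.log (1-b))^2 - (b^2 - 4*b^3 + 5*b^4 - 2*b^5)

noncomputable def vf' (b : ℝ) : ℝ :=
  (2*b*(Real.log b)^2 + 2*b*Real.log b) + (2*(1-b)*(Real.log (1-b))^2 + 2*(1-b)*Real.log (1-b))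
    - (2*b - 12*b^2 + 20*b^3 - 10*b^4)

noncomputable def vf'' (b : ℝ) : ℝ :=
  (2*(Real.log b)^2 + 6*Real.log b + 2) - (2*(Real.log (1-b))^2 + 6*Real.log (1-b) + 2)
    - (2 - 24*b + 60*b^2 - 40*b^3)

lemma sq_log_hasDeriv {b : ℝ} (h0 : 0 < b) :
    HasDerivAt (fun t : ℝ => t^2*(Real.log t)^2) (2*b*(Real.log b)^2 + 2*b*Real.log b) b := by
  have h1 : HasDerivAt (fun t : ℝ => t^2) (2*b) b := by
    simpa using hasDerivAt_pow 2 b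
  have h2 : HasDerivAt (fun t : ℝ => (Real.log t)^2) (2*Real.log b*(1/b)) b := by
    have := ((Real.hasDerivAt_log h0.ne').fun_pow 2)
    simpa [one_div] using this
  have := h1.fun_mul h2
  refine this.congr_deriv ?_
  field_simp

lemma sq_log_one_sub_hasDeriv {b : ℝ} (h1b : b < 1) :
    HasDerivAt (fun t : ℝ => (1-t)^2*(Real.log (1-t))^2)
      (-(2*(1-b)*(Real.log (1-b))^2 + 2*(1-b)*Real.log (1-b))) b := by
  have h0 : 0 < 1 - b := by linarith
  have hin : HasDerivAt (fun t : ℝ => 1 - t) (-1) b := by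
    simpa using (hasDerivAt_id b).const_sub 1
  have := (sq_log_hasDeriv h0).comp b hin
  refine this.congr_deriv ?_
  ring

lemma poly_hasDeriv (b : ℝ) : HasDerivAt (fun t : ℝ => t^2 - 4*t^3 + 5*t^4 - 2*t^5)
    (2*b - 12*b^2 + 20*b^3 - 10*b^4) b := by
  have h2 : HasDerivAt (fun t : ℝ => t^2) (2*b) b := by simpa using hasDerivAt_pow 2 b
  have h3 : HasDerivAt (fun t : ℝ => t^3) (3*b^2) b := by simpa using hasDerivAt_pow 3 b
  have h4 : HasDerivAt (fun t : ℝ => t^4) (4*b^3) b := by simpa using hasDerivAt_pow 4 b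
  have h5 : HasDerivAt (fun t : ℝ => t^5) (5*b^4) b := by simpa using hasDerivAt_pow 5 b
  have := ((h2.fun_sub (h3.const_mul 4)).fun_add (h4.const_mul 5)).fun_sub (h5.const_mul 2)
  refine this.congr_deriv ?_
  ring

lemma vf_hasDeriv {b : ℝ} (h0 : 0 < b) (h1 : b < 1) : HasDerivAt vf (vf' b) b := by
  have := ((sq_log_hasDeriv h0).fun_sub (sq_log_one_sub_hasDeriv h1)).fun_sub (poly_hasDeriv b)
  refine this.congr_deriv ?_
  simp only [vf']
  ring

lemma log_sq_aux_hasDeriv {b : ℝ} (h0 : 0 < b) :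
    HasDerivAt (fun t : ℝ => 2*t*(Real.log t)^2 + 2*t*Real.log t)
      (2*(Real.log b)^2 + 6*Real.log b + 2) b := by
  have hid : HasDerivAt (fun t : ℝ => t) 1 b := hasDerivAt_id b
  have hlog := Real.hasDerivAt_log h0.ne'
  have h2 : HasDerivAt (fun t : ℝ => (Real.log t)^2) (2*Real.log b*(1/b)) b := by
    simpa [one_div] using ((Real.hasDerivAt_log h0.ne').fun_pow 2)
  have ha : HasDerivAt (fun t : ℝ => t*(Real.log t)^2)
      (1*(Real.log b)^2 + b*(2*Real.log b*(1/b))) b := hid.fun_mul h2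
  have hb : HasDerivAt (fun t : ℝ => t*Real.log t) (1*Real.log b + b*(1/b)) b := by
    simpa [one_div] using hid.fun_mul hlog
  have h := (ha.const_mul 2).fun_add (hb.const_mul 2)
  have hbne : b ≠ 0 := h0.ne'
  have heq : 2*(1*(Real.log b)^2 + b*(2*Real.log b*(1/b))) + 2*(1*Real.log b + b*(1/b))
      = 2*(Real.log b)^2 + 6*Real.log b + 2 := by
    field_simp
    ring
  rw [heq] at h
  exact h.congr_of_eventuallyEq (Filter.Eventually.of_forall fun t => by ring)

lemma vf'_hasDeriv {b : ℝ} (h0 : 0 < b) (h1 : b < 1) : HasDerivAt vf' (vf'' b) b := by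
  have hA := log_sq_aux_hasDeriv h0
  have h1b : 0 < 1 - b := by linarith
  have hin : HasDerivAt (fun t : ℝ => 1 - t) (-1) b := by
    simpa using (hasDerivAt_id b).const_sub 1
  have hB : HasDerivAt (fun t : ℝ => 2*(1-t)*(Real.log (1-t))^2 + 2*(1-t)*Real.log (1-t))
      (-(2*(Real.log (1-b))^2 + 6*Real.log (1-b) + 2)) b := by
    have := (log_sq_aux_hasDeriv h1b).comp b hin
    refine this.congr_deriv ?_
    ring
  have hpoly : HasDerivAt (fun t : ℝ => 2*t - 12*t^2 + 20*t^3 - 10*t^4)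
      (2 - 24*b + 60*b^2 - 40*b^3) b := by
    have h2 : HasDerivAt (fun t : ℝ => t^2) (2*b) b := by simpa using hasDerivAt_pow 2 b
    have h3 : HasDerivAt (fun t : ℝ => t^3) (3*b^2) b := by simpa using hasDerivAt_pow 3 b
    have h4 : HasDerivAt (fun t : ℝ => t^4) (4*b^3) b := by simpa using hasDerivAt_pow 4 b
    have hid : HasDerivAt (fun t : ℝ => t) 1 b := hasDerivAt_id b
    have := (((hid.const_mul 2).fun_sub (h2.const_mul 12)).fun_add (h3.const_mul 20)).fun_sub
      (h4.const_mul 10)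
    refine this.congr_deriv ?_
    ring
  have heq : vf'' b = (2*(Real.log b)^2 + 6*Real.log b + 2) +
      (-(2*(Real.log (1-b))^2 + 6*Real.log (1-b) + 2)) - (2 - 24*b + 60*b^2 - 40*b^3) := by
    simp only [vf'']; ring
  rw [heq]
  exact (hA.fun_add hB).fun_sub hpoly


noncomputable def wf (b : ℝ) : ℝ := (1+2*b-2*b^2) * (-Real.log b) - 3*(1-b)

noncomputable def wf' (b : ℝ) : ℝ := (2-4*b)*(-Real.log b) - (1+2*b-2*b^2)/b + 3

lemma wf_hasDeriv {b : ℝ} (h0 : 0 < b) : HasDerivAt wf (wf' b) b := by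
  have h2 : HasDerivAt (fun t : ℝ => t^2) (2*b) b := by simpa using hasDerivAt_pow 2 b
  have hid : HasDerivAt (fun t : ℝ => t) 1 b := hasDerivAt_id b
  have hq : HasDerivAt (fun t : ℝ => 1+2*t-2*t^2) (2 - 2*(2*b)) b := by
    have := ((hid.const_mul 2).const_add 1).fun_sub (h2.const_mul 2)
    refine this.congr_deriv ?_
    ring
  have hlog : HasDerivAt (fun t : ℝ => -Real.log t) (-(1/b)) b := by
    simpa [one_div] using (Real.hasDerivAt_log h0.ne').fun_neg
  have hl : HasDerivAt (fun t : ℝ => 3*(1-t)) (-3) b := by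
    have := ((hasDerivAt_id b).const_sub 1).const_mul 3
    refine this.congr_deriv ?_
    ring
  have h := (hq.fun_mul hlog).fun_sub hl
  have heq : (2 - 2*(2*b)) * (-Real.log b) + (1+2*b-2*b^2) * (-(1/b)) - (-3) = wf' b := by
    simp only [wf']
    field_simp
    ring
  rw [← heq]
  exact h.congr_of_eventuallyEq (Filter.Eventually.of_forall fun t => by simp only [wf])

noncomputable def df (y : ℝ) : ℝ :=
  2*y*(9-y^2)/(3-y^2)^2 - (Real.log (1+y) - Real.log (1-y))

noncomputable def df' (y : ℝ) : ℝ := (54+36*y^2-2*y^4)/(3-y^2)^3 - 2/(1-y^2)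

lemma df_hasDeriv {y : ℝ} (hm : -1 < y) (h1 : y < 1) : HasDerivAt df (df' y) y := by
  have hy3 : (3 - y^2) ≠ 0 := by nlinarith
  have h1p : (0:ℝ) < 1 + y := by linarith
  have h1m : (0:ℝ) < 1 - y := by linarith
  have h2 : HasDerivAt (fun t : ℝ => t^2) (2*y) y := by simpa using hasDerivAt_pow 2 y
  have hnum : HasDerivAt (fun t : ℝ => 2*t*(9-t^2)) (2*(9-y^2) + 2*y*(-(2*y))) y := by
    have ha : HasDerivAt (fun t : ℝ => 2*t) 2 y := by
      simpa using (hasDerivAt_id y).const_mul 2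
    have hb : HasDerivAt (fun t : ℝ => 9-t^2) (-(2*y)) y := by
      simpa using h2.const_sub 9
    simpa using ha.fun_mul hb
  have hden : HasDerivAt (fun t : ℝ => (3-t^2)^2) (2*(3-y^2)*(-(2*y))) y := by
    have hb : HasDerivAt (fun t : ℝ => 3-t^2) (-(2*y)) y := by
      simpa using h2.const_sub 3
    have := hb.fun_pow 2
    refine this.congr_deriv ?_
    push_cast
    ring
  have hdiv := hnum.div hden (by positivity)
  have hlp : HasDerivAt (fun t : ℝ => Real.log (1+t)) (1/(1+y)) y := by
    have hin : HasDerivAt (fun t : ℝ => 1+t) 1 y := by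
      simpa using (hasDerivAt_id y).const_add 1
    have := (Real.hasDerivAt_log h1p.ne').comp y hin
    exact this.congr_deriv (by simp)
  have hlm : HasDerivAt (fun t : ℝ => Real.log (1-t)) (-(1/(1-y))) y := by
    have hin : HasDerivAt (fun t : ℝ => 1-t) (-1) y := by
      simpa using (hasDerivAt_id y).const_sub 1
    have := (Real.hasDerivAt_log h1m.ne').comp y hin
    refine this.congr_deriv ?_
    field_simp
  have h := hdiv.fun_sub (hlp.fun_sub hlm)
  have heq : ((2*(9-y^2) + 2*y*(-(2*y))) * ((3-y^2)^2)
      - 2*y*(9-y^2) * (2*(3-y^2)*(-(2*y)))) / ((3-y^2)^2)^2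
      - (1/(1+y) - (-(1/(1-y)))) = df' y := by
    have n1 : (1+y) ≠ 0 := h1p.ne'
    have n2 : (1-y) ≠ 0 := h1m.ne'
    have n3 : (1-y^2) ≠ 0 := by nlinarith
    simp only [df']
    field_simp
    ring
  rw [← heq]
  exact h


noncomputable def psi (y : ℝ) : ℝ :=
  (1+y)^2/2 * Real.log ((1+y)/2) - (1-y)^2/2 * Real.log ((1-y)/2) + y * Real.log ((3-y^2)/2)

noncomputable def psi' (y : ℝ) : ℝ :=
  Real.log ((3-y^2)/2) + 3*(1-y^2)/(3-y^2) + (1+y)*Real.log ((1+y)/2) + (1-y)*Real.log ((1-y)/2)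

noncomputable def psi'' (y : ℝ) : ℝ :=
  Real.log (1+y) - Real.log (1-y) - 2*y/(3-y^2) - 12*y/(3-y^2)^2

lemma psi_hasDeriv {y : ℝ} (hm : -1 < y) (h1 : y < 1) : HasDerivAt psi (psi' y) y := by
  have h1p : (0:ℝ) < 1 + y := by linarith
  have h1m : (0:ℝ) < 1 - y := by linarith
  have h3 : (0:ℝ) < 3 - y^2 := by nlinarith
  have h2 : HasDerivAt (fun t : ℝ => t^2) (2*y) y := by simpa using hasDerivAt_pow 2 y
  -- term 1
  have hA1 : HasDerivAt (fun t : ℝ => (1+t)^2/2) (1+y) y := by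
    have hin : HasDerivAt (fun t : ℝ => 1+t) 1 y := by
      simpa using (hasDerivAt_id y).const_add 1
    have := (hin.fun_pow 2).div_const 2
    refine this.congr_deriv ?_
    push_cast; ring
  have hL1 : HasDerivAt (fun t : ℝ => Real.log ((1+t)/2)) (1/(1+y)) y := by
    have hin : HasDerivAt (fun t : ℝ => (1+t)/2) (1/2) y := by
      simpa using ((hasDerivAt_id y).const_add 1).div_const 2
    have := (Real.hasDerivAt_log (by positivity : ((1+y)/2:ℝ) ≠ 0)).comp y hin
    refine this.congr_deriv ?_
    field_simp
  have hT1 := hA1.fun_mul hL1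
  -- term 2
  have hA2 : HasDerivAt (fun t : ℝ => (1-t)^2/2) (-(1-y)) y := by
    have hin : HasDerivAt (fun t : ℝ => 1-t) (-1) y := by
      simpa using (hasDerivAt_id y).const_sub 1
    have := (hin.fun_pow 2).div_const 2
    refine this.congr_deriv ?_
    push_cast; ring
  have hL2 : HasDerivAt (fun t : ℝ => Real.log ((1-t)/2)) (-(1/(1-y))) y := by
    have hin : HasDerivAt (fun t : ℝ => (1-t)/2) (-(1/2)) y := by
      have := ((hasDerivAt_id y).const_sub 1).div_const 2
      refine this.congr_deriv ?_
      norm_num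
    have := (Real.hasDerivAt_log (by positivity : ((1-y)/2:ℝ) ≠ 0)).comp y hin
    refine this.congr_deriv ?_
    field_simp
  have hT2 := hA2.fun_mul hL2
  -- term 3
  have hL3 : HasDerivAt (fun t : ℝ => Real.log ((3-t^2)/2)) (-(2*y)/(3-y^2)) y := by
    have hin : HasDerivAt (fun t : ℝ => (3-t^2)/2) (-(2*y)/2) y := by
      have := (h2.const_sub 3).div_const 2
      convert this using 1
    have := (Real.hasDerivAt_log (by positivity : ((3-y^2)/2:ℝ) ≠ 0)).comp y hin
    refine this.congr_deriv ?_
    field_simp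
  have hT3 := (hasDerivAt_id y).fun_mul hL3
  have h := (hT1.fun_sub hT2).fun_add hT3
  have heq : ((1+y)*Real.log ((1+y)/2) + (1+y)^2/2*(1/(1+y)))
      - ((-(1-y))*Real.log ((1-y)/2) + (1-y)^2/2*(-(1/(1-y))))
      + (1*Real.log ((3-y^2)/2) + y*(-(2*y)/(3-y^2))) = psi' y := by
    simp only [psi']
    field_simp
    ring
  rw [← heq]
  exact h.congr_of_eventuallyEq (Filter.Eventually.of_forall fun t => by simp [psi])

lemma psi'_hasDeriv {y : ℝ} (hm : -1 < y) (h1 : y < 1) : HasDerivAt psi' (psi'' y) y := by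
  have h1p : (0:ℝ) < 1 + y := by linarith
  have h1m : (0:ℝ) < 1 - y := by linarith
  have h3 : (0:ℝ) < 3 - y^2 := by nlinarith
  have h2 : HasDerivAt (fun t : ℝ => t^2) (2*y) y := by simpa using hasDerivAt_pow 2 y
  have hL3 : HasDerivAt (fun t : ℝ => Real.log ((3-t^2)/2)) (-(2*y)/(3-y^2)) y := by
    have hin : HasDerivAt (fun t : ℝ => (3-t^2)/2) (-(2*y)/2) y := by
      have := (h2.const_sub 3).div_const 2
      convert this using 1
    have := (Real.hasDerivAt_log (by positivity : ((3-y^2)/2:ℝ) ≠ 0)).comp y hin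
    refine this.congr_deriv ?_
    field_simp
  have hQ : HasDerivAt (fun t : ℝ => 3*(1-t^2)/(3-t^2))
      (((-(6*y))*(3-y^2) - 3*(1-y^2)*(-(2*y)))/(3-y^2)^2) y := by
    have hnum : HasDerivAt (fun t : ℝ => 3*(1-t^2)) (-(6*y)) y := by
      have := (h2.const_sub 1).const_mul 3
      refine this.congr_deriv ?_
      ring
    have hden : HasDerivAt (fun t : ℝ => 3-t^2) (-(2*y)) y := by
      simpa using h2.const_sub 3
    exact hnum.div hden h3.ne'
  have hL1 : HasDerivAt (fun t : ℝ => Real.log ((1+t)/2)) (1/(1+y)) y := by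
    have hin : HasDerivAt (fun t : ℝ => (1+t)/2) (1/2) y := by
      simpa using ((hasDerivAt_id y).const_add 1).div_const 2
    have := (Real.hasDerivAt_log (by positivity : ((1+y)/2:ℝ) ≠ 0)).comp y hin
    refine this.congr_deriv ?_
    field_simp
  have hL2 : HasDerivAt (fun t : ℝ => Real.log ((1-t)/2)) (-(1/(1-y))) y := by
    have hin : HasDerivAt (fun t : ℝ => (1-t)/2) (-(1/2)) y := by
      have := ((hasDerivAt_id y).const_sub 1).div_const 2
      refine this.congr_deriv ?_
      norm_num
    have := (Real.hasDerivAt_log (by positivity : ((1-y)/2:ℝ) ≠ 0)).comp y hin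
    refine this.congr_deriv ?_
    field_simp
  have hu : HasDerivAt (fun t : ℝ => 1+t) 1 y := by
    simpa using (hasDerivAt_id y).const_add 1
  have hv : HasDerivAt (fun t : ℝ => 1-t) (-1) y := by
    simpa using (hasDerivAt_id y).const_sub 1
  have hT3 := hu.fun_mul hL1
  have hT4 := hv.fun_mul hL2
  have h := ((hL3.fun_add hQ).fun_add hT3).fun_add hT4
  have heq : (-(2*y)/(3-y^2) + ((-(6*y))*(3-y^2) - 3*(1-y^2)*(-(2*y)))/(3-y^2)^2
      + (1*Real.log ((1+y)/2) + (1+y)*(1/(1+y)))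
      + ((-1)*Real.log ((1-y)/2) + (1-y)*(-(1/(1-y))))) = psi'' y := by
    simp only [psi'', Real.log_div h1p.ne' (by norm_num : (2:ℝ) ≠ 0),
      Real.log_div h1m.ne' (by norm_num : (2:ℝ) ≠ 0)]
    field_simp
    ring
  rw [← heq]
  exact h.congr_of_eventuallyEq (Filter.Eventually.of_forall fun t => by simp only [psi'])

lemma vf''_neg {b : ℝ} (hb : b ∈ Ioo (1/4:ℝ) (1/2)) : vf'' b < 0 := by
  obtain ⟨h14, h12⟩ := hb
  have h0 : (0:ℝ) < b := by linarith
  have h1b : (0:ℝ) < 1 - b := by linarith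
  set L := Real.log b with hL
  set M := Real.log (1-b) with hM
  have hd : Real.log (b/(1-b)) ≤ b/(1-b) - 1 := Real.log_le_sub_one_of_pos (by positivity)
  rw [Real.log_div h0.ne' h1b.ne'] at hd
  -- (M - L) * (2*(1-b)) ≥ 2*(1-2b)
  have hd2 : (L - M) * (1-b) ≤ (b/(1-b) - 1) * (1-b) := mul_le_mul_of_nonneg_right hd h1b.le
  have hd3 : (b/(1-b) - 1) * (1-b) = 2*b - 1 := by field_simp; ring
  have hD : (M - L) * (2*(1-b)) ≥ 2*(1-2*b) := by nlinarith
  have hMLpos : 0 ≤ M - L := by nlinarith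
  have hab : (3:ℝ)/16 ≤ b*(1-b) := by nlinarith
  have hlog : Real.log (3/16) ≤ Real.log (b*(1-b)) :=
    Real.log_le_log (by norm_num) hab
  have h316 : Real.log ((3:ℝ)/16) = Real.log 3 - 4*Real.log 2 := by
    rw [Real.log_div (by norm_num) (by norm_num), show (16:ℝ) = 2^4 by norm_num, Real.log_pow]
    push_cast; ring
  rw [h316, Real.log_mul h0.ne' h1b.ne'] at hlog
  have l3 := log3_lb
  have l2 := Real.log_two_lt_d9
  have hS : (1.25389:ℝ) ≤ L + M + 3 := by rw [hL, hM]; nlinarith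
  have hprod : (2*(1-2*b)) * (1.25389:ℝ) ≤ ((M - L) * (2*(1-b))) * (L + M + 3) := by
    apply mul_le_mul hD hS (by norm_num) (by nlinarith)
  have hident : vf'' b = 2*(L-M)*(L+M+3) - (2 - 24*b + 60*b^2 - 40*b^3) := by
    simp only [vf'']; ring
  nlinarith [hprod, sq_nonneg (1-2*b), mul_pos (mul_pos h0 h1b) h1b]

lemma vf'_quarter_neg : vf' (1/4 : ℝ) < 0 := by
  have e1 : Real.log ((1:ℝ)/4) = -(2*Real.log 2) := by
    rw [one_div, Real.log_inv, show (4:ℝ) = 2^2 by norm_num, Real.log_pow]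
    push_cast; ring
  have e2 : Real.log (1 - (1:ℝ)/4) = Real.log 3 - 2*Real.log 2 := by
    rw [show (1 - (1:ℝ)/4) = 3/4 by norm_num, Real.log_div (by norm_num) (by norm_num),
      show (4:ℝ) = 2^2 by norm_num, Real.log_pow]
    push_cast; ring
  have l2lo := Real.log_two_gt_d9
  have l2hi := Real.log_two_lt_d9
  have l3lo := log3_lb
  have l3hi := log3_ub
  simp only [vf', e1, e2]
  nlinarith [sq_nonneg (Real.log 2 - 0.69314718), sq_nonneg (Real.log 3 - 2*Real.log 2 + 0.2876821)]

lemma vf_nonneg {b : ℝ} (hb : b ∈ Icc (1/4:ℝ) (1/2)) : 0 ≤ vf b := by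
  have hmem : ∀ z ∈ Icc (1/4:ℝ) (1/2), 0 < z ∧ z < 1 := by
    intro z hz; constructor <;> [linarith [hz.1]; linarith [hz.2]]
  have hanti' : StrictAntiOn vf' (Icc (1/4:ℝ) (1/2)) := by
    apply strictAntiOn_of_deriv_neg (convex_Icc _ _)
    · intro z hz
      exact (vf'_hasDeriv (hmem z hz).1 (hmem z hz).2).continuousAt.continuousWithinAt
    · rw [interior_Icc]
      intro z hz
      have hz' : z ∈ Icc (1/4:ℝ) (1/2) := Ioo_subset_Icc_self hz
      rw [(vf'_hasDeriv (hmem z hz').1 (hmem z hz').2).deriv]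
      exact vf''_neg hz
  have hanti : AntitoneOn vf (Icc (1/4:ℝ) (1/2)) := by
    apply antitoneOn_of_deriv_nonpos (convex_Icc _ _)
    · intro z hz
      exact (vf_hasDeriv (hmem z hz).1 (hmem z hz).2).continuousAt.continuousWithinAt
    · rw [interior_Icc]
      intro z hz
      have hz' : z ∈ Icc (1/4:ℝ) (1/2) := Ioo_subset_Icc_self hz
      exact (vf_hasDeriv (hmem z hz').1 (hmem z hz').2).differentiableAt.differentiableWithinAt
    · rw [interior_Icc]
      intro z hz
      have hz' : z ∈ Icc (1/4:ℝ) (1/2) := Ioo_subset_Icc_self hz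
      rw [(vf_hasDeriv (hmem z hz').1 (hmem z hz').2).deriv]
      have := hanti' (left_mem_Icc.2 (by norm_num)) hz' hz.1
      linarith [vf'_quarter_neg]
  have hv12 : vf (1/2 : ℝ) = 0 := by
    simp only [vf]
    norm_num
  have := hanti hb (right_mem_Icc.2 (by norm_num)) hb.2
  linarith

set_option maxHeartbeats 2000000 in
lemma keyQ {x : ℝ} (hx0 : 0 < x) (hx1 : x < 1) :
    (Real.log ((1+x)/2))^2 * ((1+x)/2)^2 + x * (Real.log ((3-x^2)/2))^2 / 4 <
      (Real.log ((1-x)/2))^2 * ((1-x)/2)^2 := by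
  set a := (1+x)/2 with ha_def
  set b := (1-x)/2 with hb_def
  set c := (3-x^2)/2 with hc_def
  have ha0 : (1:ℝ)/2 < a := by rw [ha_def]; linarith
  have ha1 : a < 1 := by rw [ha_def]; linarith
  have hb0 : (0:ℝ) < b := by rw [hb_def]; linarith
  have hb12 : b < 1/2 := by rw [hb_def]; linarith
  have hc1 : (1:ℝ) < c := by rw [hc_def]; nlinarith
  have hcab : c - 1 = 2*a*b := by rw [hc_def, ha_def, hb_def]; ring
  have hLc0 : 0 < Real.log c := Real.log_pos hc1
  have hLcub : Real.log c < 2*a*b := by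
    have := Real.log_lt_sub_one_of_pos (by linarith : (0:ℝ) < c) (by linarith : c ≠ 1)
    linarith
  have hLa0 : Real.log a ≤ 0 := Real.log_nonpos (by linarith) ha1.le
  have hLa : -Real.log a ≤ b/a := by
    have h := log_ge_sub (show (0:ℝ) < a by linarith)
    have hba : b/a = 1/a - 1 := by
      rw [ha_def, hb_def]; field_simp; ring
    linarith
  have hLasq : (Real.log a)^2 * a^2 ≤ b^2 := by
    have h1 : (-Real.log a) * a ≤ b := by
      have := mul_le_mul_of_nonneg_right hLa (show (0:ℝ) ≤ a by linarith)
      rwa [div_mul_cancel₀] at this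
      linarith
    nlinarith [mul_nonneg (neg_nonneg.2 hLa0) (show (0:ℝ) ≤ a by linarith)]
  have hcsq : (Real.log c)^2 < 4*(a^2*b^2) := by nlinarith
  have hab2pos : (0:ℝ) < a^2*b^2 := by positivity
  rcases le_or_gt x (1/2) with hx12 | hx12
  · -- b ∈ [1/4, 1/2)
    have hbmem : b ∈ Icc (1/4:ℝ) (1/2) := by
      constructor
      · rw [hb_def]; linarith
      · rw [hb_def]; linarith
    have hv := vf_nonneg hbmem
    have harg : 1 - b = a := by rw [ha_def, hb_def]; ring
    have hvP : vf b = (Real.log b)^2*b^2 - (Real.log a)^2*a^2 - x*(a^2*b^2) := by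
      simp only [vf, harg]
      rw [ha_def, hb_def]
      ring
    have h1 : x*(Real.log c)^2/4 < x*(a^2*b^2) := by
      nlinarith [mul_lt_mul_of_pos_left hcsq (show (0:ℝ) < x/4 by linarith)]
    linarith [hv.trans_eq hvP]
  · -- region I : b < 1/4
    have hb14 : b < 1/4 := by rw [hb_def]; linarith
    have ha2 : a^2 ≤ 1 := by nlinarith
    have hLb2 : 1 + a^2 ≤ (Real.log b)^2 := by
      rcases le_or_gt b (1/5) with hb5 | hb5
      · have hlb : Real.log b ≤ Real.log (1/5) := Real.log_le_log hb0 hb5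
        have h5 : Real.log ((1:ℝ)/5) = -Real.log 5 := by
          rw [one_div, Real.log_inv]
        have hl5 := log5_lb
        have hu : (1.586:ℝ) ≤ -Real.log b := by rw [h5] at hlb; linarith
        have hsq : (1.586:ℝ)*1.586 ≤ (-Real.log b)*(-Real.log b) :=
          mul_self_le_mul_self (by norm_num) hu
        nlinarith
      · have hlb : Real.log b ≤ Real.log (1/4) := Real.log_le_log hb0 hb14.le
        have h4 : Real.log ((1:ℝ)/4) = -(2*Real.log 2) := by
          rw [one_div, Real.log_inv, show (4:ℝ) = 2^2 by norm_num, Real.log_pow]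
          push_cast; ring
        have ha45 : a ≤ 4/5 := by
          rw [ha_def]; rw [hb_def] at hb5; linarith
        have ha452 : a^2 ≤ 16/25 := by nlinarith
        have hl2 := Real.log_two_gt_d9
        have hu : (1.386:ℝ) ≤ -Real.log b := by rw [h4] at hlb; linarith
        have hsq : (1.386:ℝ)*1.386 ≤ (-Real.log b)*(-Real.log b) :=
          mul_self_le_mul_self (by norm_num) hu
        nlinarith
    have hx1' : x*(Real.log c)^2/4 < a^2*b^2 := by
      have h1 := mul_lt_mul_of_pos_left hcsq (show (0:ℝ) < x/4 by linarith)
      have h2 := mul_pos (show (0:ℝ) < 1-x by linarith) hab2pos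
      nlinarith
    have hmul : (1+a^2)*b^2 ≤ (Real.log b)^2*b^2 :=
      mul_le_mul_of_nonneg_right hLb2 (sq_nonneg b)
    nlinarith [sq_nonneg b, hLasq, hx1', hmul]

lemma wf'_neg {b : ℝ} (h0 : 0 < b) (hb : b ≤ 1/10) : wf' b < 0 := by
  have hlog : -Real.log b ≤ 1/(Real.exp 1 * b) := neg_log_le_inv_e h0
  have he := Real.exp_one_gt_d9
  have hepos := Real.exp_pos 1
  have hlpos : 0 < -Real.log b := by
    rw [neg_pos]; exact Real.log_neg h0 (by linarith)
  have h1 : (2-4*b)*(-Real.log b) ≤ 2*(1/(Real.exp 1 * b)) := by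
    nlinarith
  have h2 : (2*(1/(Real.exp 1 * b)))*b = 2/Real.exp 1 := by field_simp
  have h3 : (2:ℝ)/Real.exp 1 < 0.736 := by
    rw [div_lt_iff₀ hepos]; nlinarith
  have h4 := mul_le_mul_of_nonneg_right h1 h0.le
  rw [h2] at h4
  have expand : wf' b * b = ((2-4*b)*(-Real.log b))*b - (1+2*b-2*b^2) + 3*b := by
    simp only [wf']; field_simp; try ring
  have hkey : wf' b * b < 0 := by nlinarith
  by_contra hc
  push_neg at hc
  nlinarith [mul_nonneg hc h0.le]

lemma wf_nonneg {b : ℝ} (h0 : 0 < b) (hb : b ≤ 1/10) : 0 ≤ wf b := by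
  have h10 : 0 ≤ wf (1/10 : ℝ) := by
    have hl : Real.log ((1:ℝ)/10) = -Real.log 10 := by rw [one_div, Real.log_inv]
    have := log10_lb
    simp only [wf, hl]
    nlinarith
  have hanti : AntitoneOn wf (Icc b (1/10)) := by
    apply antitoneOn_of_deriv_nonpos (convex_Icc _ _)
    · intro z hz
      exact (wf_hasDeriv (h0.trans_le hz.1)).continuousAt.continuousWithinAt
    · rw [interior_Icc]
      intro z hz
      exact (wf_hasDeriv (h0.trans hz.1)).differentiableAt.differentiableWithinAt
    · rw [interior_Icc]
      intro z hz
      rw [(wf_hasDeriv (h0.trans hz.1)).deriv]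
      exact (wf'_neg (h0.trans hz.1) (hz.2.le.trans (le_refl _))).le
  have := hanti (left_mem_Icc.2 hb) (right_mem_Icc.2 hb) hb
  linarith

lemma psi'_nonpos {y : ℝ} (h45 : 4/5 < y) (h1 : y < 1) : psi' y ≤ 0 := by
  set b := (1-y)/2 with hbdef
  have hb0 : (0:ℝ) < b := by rw [hbdef]; linarith
  have hb10 : b ≤ 1/10 := by rw [hbdef]; linarith
  have hw := wf_nonneg hb0 hb10
  have hq : (0:ℝ) < 1+2*b-2*b^2 := by nlinarith
  have h3pos : (0:ℝ) < 3-y^2 := by nlinarith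
  have hA : Real.log ((3-y^2)/2) ≤ 2*b - 2*b^2 := by
    have h3 : (0:ℝ) < (3-y^2)/2 := by linarith
    have hle := Real.log_le_sub_one_of_pos h3
    have he : (3-y^2)/2 - 1 = 2*b - 2*b^2 := by rw [hbdef]; ring
    linarith
  have hB : (1+y)*Real.log ((1+y)/2) ≤ -(2*b - 2*b^2) := by
    have hpos : (0:ℝ) < (1+y)/2 := by linarith
    have hle := Real.log_le_sub_one_of_pos hpos
    have h1y : (0:ℝ) ≤ 1 + y := by linarith
    have hmul := mul_le_mul_of_nonneg_left hle h1y
    have he : (1+y)*((1+y)/2 - 1) = -(2*b-2*b^2) := by rw [hbdef]; ring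
    linarith
  have hD : 3*(1-y^2)/(3-y^2) + (1-y)*Real.log ((1-y)/2) ≤ 0 := by
    have e1 : 3*(1-y^2)/(3-y^2) = 6*(b*(1-b))/(1+2*b-2*b^2) := by
      rw [hbdef]
      rw [div_eq_div_iff h3pos.ne' (by rw [hbdef] at hq; exact hq.ne' : (1+2*((1-y)/2)-2*((1-y)/2)^2) ≠ 0)]
      ring
    have e2 : (1-y) = 2*b := by rw [hbdef]; ring
    have hw2 := mul_le_mul_of_nonneg_left hw (show (0:ℝ) ≤ 2*b by linarith)
    -- 0 ≤ 2b * wf b, i.e. 2b(1+2b-2b²)(-log b) - 6b(1-b) ≥ 0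
    have e3 : 6*(b*(1-b))/(1+2*b-2*b^2) ≤ 2*b*(-Real.log b) := by
      rw [div_le_iff₀ hq]
      simp only [wf] at hw2
      nlinarith [hw2]
    have e4 : Real.log ((1-y)/2) = Real.log b := by rw [hbdef]
    rw [e4, e1]
    have e5 : (1-y)*Real.log b = 2*b*Real.log b := by rw [e2]
    rw [e5]
    linarith
  simp only [psi']
  linarith

lemma psi''_nonpos {y : ℝ} (h0 : 0 ≤ y) (h45 : y ≤ 4/5) : psi'' y ≤ 0 := by
  have hmono : MonotoneOn df (Icc (0:ℝ) (4/5)) := by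
    apply monotoneOn_of_deriv_nonneg (convex_Icc _ _)
    · intro z hz
      exact (df_hasDeriv (by linarith [hz.1] : (-1:ℝ) < z)
        (by linarith [hz.2] : z < 1)).continuousAt.continuousWithinAt
    · rw [interior_Icc]
      intro z hz
      exact (df_hasDeriv (by linarith [hz.1] : (-1:ℝ) < z)
        (by linarith [hz.2] : z < 1)).differentiableAt.differentiableWithinAt
    · rw [interior_Icc]
      intro z hz
      rw [(df_hasDeriv (by linarith [hz.1] : (-1:ℝ) < z) (by linarith [hz.2] : z < 1)).deriv]
      simp only [df']
      have hz1 : (0:ℝ) < 1 - z^2 := by nlinarith [hz.1, hz.2]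
      have hz3' : (0:ℝ) < 3-z^2 := by nlinarith [hz.1, hz.2]
      have hz3 : (0:ℝ) < (3-z^2)^3 := pow_pos hz3' 3
      rw [sub_nonneg, div_le_div_iff₀ hz1 hz3]
      have h9 : (0:ℝ) ≤ 9 - 14*z^2 + z^4 := by nlinarith [hz.1.le, hz.2]
      nlinarith [mul_nonneg (sq_nonneg z) h9]
  have hdf0 : df 0 = 0 := by norm_num [df]
  have hmem : y ∈ Icc (0:ℝ) (4/5) := ⟨h0, h45⟩
  have hdf := hmono (left_mem_Icc.2 (by norm_num)) hmem h0
  rw [hdf0] at hdf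
  have h3 : (0:ℝ) < 3 - y^2 := by nlinarith
  have h1y : (0:ℝ) < 1 - y^2 := by nlinarith
  have hE : 2*y*(9-y^2)/(3-y^2)^2 - (2*y/(3-y^2) + 12*y/(3-y^2)^2) = 0 := by
    field_simp
    ring
  have hid : psi'' y = -df y + (2*y*(9-y^2)/(3-y^2)^2 - (2*y/(3-y^2) + 12*y/(3-y^2)^2)) := by
    simp only [psi'', df]; ring
  rw [hid, hE]
  linarith

lemma psi_zero : psi 0 = 0 := by norm_num [psi]

lemma psi_one : psi 1 = 0 := by norm_num [psi]

lemma psi_contOn : ContinuousOn psi (Icc (4/5:ℝ) 1) := by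
  have hfun : psi = fun y => (1+y)^2/2 * Real.log ((1+y)/2)
      - 2*(((1-y)/2) * (((1-y)/2) * Real.log ((1-y)/2))) + y * Real.log ((3-y^2)/2) := by
    funext y; simp only [psi]; ring
  rw [hfun]
  apply ContinuousOn.add
  apply ContinuousOn.sub
  · intro y hy
    have h1 : (0:ℝ) < (1+y)/2 := by have := hy.1; norm_num at this ⊢; linarith
    apply ContinuousAt.continuousWithinAt
    apply ContinuousAt.mul
    · exact (((continuous_const.add continuous_id).pow 2).div_const 2).continuousAt
    · exact ContinuousAt.log (((continuous_const.add continuous_id).div_const 2).continuousAt)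
        h1.ne'
  · have hs : Continuous fun y : ℝ => (1-y)/2 := by fun_prop
    have hml : Continuous fun y : ℝ => ((1-y)/2) * Real.log ((1-y)/2) :=
      Real.continuous_mul_log.comp hs
    exact (continuous_const.mul (hs.mul hml)).continuousOn
  · intro y hy
    have h1 : (0:ℝ) < (3-y^2)/2 := by
      have := hy.1; have := hy.2; norm_num at *; nlinarith
    apply ContinuousAt.continuousWithinAt
    apply ContinuousAt.mul continuous_id.continuousAt
    exact ContinuousAt.log
      (((continuous_const.sub (continuous_pow 2)).div_const 2).continuousAt) h1.ne'

lemma psi_antitoneOn : AntitoneOn psi (Icc (4/5:ℝ) 1) := by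
  apply antitoneOn_of_deriv_nonpos (convex_Icc _ _) psi_contOn
  · rw [interior_Icc]
    intro z hz
    exact (psi_hasDeriv (by linarith [hz.1] : (-1:ℝ) < z)
      hz.2).differentiableAt.differentiableWithinAt
  · rw [interior_Icc]
    intro z hz
    rw [(psi_hasDeriv (by linarith [hz.1] : (-1:ℝ) < z) hz.2).deriv]
    exact psi'_nonpos hz.1 hz.2

lemma psi_nonneg {x : ℝ} (hx0 : 0 < x) (hx1 : x < 1) : 0 ≤ psi x := by
  have h45 : 0 ≤ psi (4/5 : ℝ) := by
    have := psi_antitoneOn (left_mem_Icc.2 (by norm_num)) (right_mem_Icc.2 (by norm_num))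
      (by norm_num)
    rw [psi_one] at this
    linarith
  rcases le_or_gt x (4/5) with h | h
  · have hconc : ConcaveOn ℝ (Icc (0:ℝ) (4/5)) psi := by
      apply concaveOn_of_hasDerivWithinAt2_nonpos (convex_Icc _ _) (f' := psi') (f'' := psi'')
      · intro y hy
        exact (psi_hasDeriv (by linarith [hy.1] : (-1:ℝ) < y)
          (by linarith [hy.2] : y < 1)).continuousAt.continuousWithinAt
      · rw [interior_Icc]
        intro y hy
        exact (psi_hasDeriv (by linarith [hy.1] : (-1:ℝ) < y)
          (by linarith [hy.2] : y < 1)).hasDerivWithinAt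
      · rw [interior_Icc]
        intro y hy
        exact (psi'_hasDeriv (by linarith [hy.1] : (-1:ℝ) < y)
          (by linarith [hy.2] : y < 1)).hasDerivWithinAt
      · rw [interior_Icc]
        intro y hy
        exact psi''_nonpos hy.1.le hy.2.le
    have hkey := hconc.2 (left_mem_Icc.2 (by norm_num) : (0:ℝ) ∈ Icc (0:ℝ) (4/5))
      (right_mem_Icc.2 (by norm_num) : (4/5:ℝ) ∈ Icc (0:ℝ) (4/5))
      (show (0:ℝ) ≤ 1 - (5/4)*x by linarith) (show (0:ℝ) ≤ (5/4)*x by linarith)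
      (by ring)
    simp only [smul_eq_mul, psi_zero, mul_zero, smul_zero, zero_add] at hkey
    have harg : ((5/4)*x) * (4/5 : ℝ) = x := by ring
    rw [harg] at hkey
    nlinarith
  · have := psi_antitoneOn ⟨h.le, hx1.le⟩ (right_mem_Icc.2 (by norm_num)) hx1.le
    rw [psi_one] at this
    linarith

lemma rpow_two_sub_hasDeriv {A : ℝ} (hA : 0 < A) (p : ℝ) :
    HasDerivAt (fun q : ℝ => A ^ (2 - q)) (-(Real.log A) * A ^ (2-p)) p := by
  have hfun : (fun q : ℝ => A ^ (2 - q)) = fun q => Real.exp (Real.log A * (2 - q)) := by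
    funext q; rw [Real.rpow_def_of_pos hA]
  have hlin : HasDerivAt (fun q : ℝ => Real.log A * (2 - q)) (Real.log A * (-1)) p :=
    ((hasDerivAt_id p).const_sub 2).const_mul (Real.log A)
  have h := hlin.exp
  rw [hfun]
  convert h using 1
  rw [Real.rpow_def_of_pos hA]
  ring

lemma rpow_neg_half_hasDeriv {C : ℝ} (hC : 0 < C) (p : ℝ) :
    HasDerivAt (fun q : ℝ => C ^ (-q / 2)) (-(Real.log C)/2 * C ^ (-p/2)) p := by
  have hfun : (fun q : ℝ => C ^ (-q / 2)) = fun q => Real.exp (Real.log C * (-q / 2)) := by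
    funext q; rw [Real.rpow_def_of_pos hC]
  have hin : HasDerivAt (fun q : ℝ => -q / 2) (-1/2 : ℝ) p := by
    have := ((hasDerivAt_id p).fun_neg).div_const 2
    exact this
  have hlin : HasDerivAt (fun q : ℝ => Real.log C * (-q / 2)) (Real.log C * (-1/2)) p :=
    hin.const_mul (Real.log C)
  have h := hlin.exp
  rw [hfun]
  convert h using 1
  rw [Real.rpow_def_of_pos hC]
  ring

set_option maxHeartbeats 2000000 in
theorem h_strictConcave_and_decreasing {x : ℝ} (hx : x ∈ Set.Ioo (0:ℝ) 1) :
    StrictConcaveOn ℝ (Set.Icc (0:ℝ) 2)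
      (fun p : ℝ => ((1 + x) / 2) ^ (2 - p) - ((1 - x) / 2) ^ (2 - p)
        + x * ((3 - x ^ 2) / 2) ^ (-p / 2)) ∧
    StrictAntiOn
      (fun p : ℝ => ((1 + x) / 2) ^ (2 - p) - ((1 - x) / 2) ^ (2 - p)
        + x * ((3 - x ^ 2) / 2) ^ (-p / 2)) (Set.Icc (0:ℝ) 2) := by
  obtain ⟨hx0, hx1⟩ := hx
  have hA : (0:ℝ) < (1+x)/2 := by linarith
  have hB : (0:ℝ) < (1-x)/2 := by linarith
  have hC1 : (1:ℝ) ≤ (3-x^2)/2 := by nlinarith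
  have hC : (0:ℝ) < (3-x^2)/2 := by linarith
  have hA1 : (1+x)/2 ≤ 1 := by linarith
  have hBA : (1-x)/2 ≤ (1+x)/2 := by linarith
  set F : ℝ → ℝ := fun p : ℝ => ((1 + x) / 2) ^ (2 - p) - ((1 - x) / 2) ^ (2 - p)
    + x * ((3 - x ^ 2) / 2) ^ (-p / 2) with hFdef
  set F' : ℝ → ℝ := fun p : ℝ => -(Real.log ((1+x)/2)) * ((1+x)/2) ^ (2-p)
    + (Real.log ((1-x)/2)) * ((1-x)/2) ^ (2-p)
    - (x * Real.log ((3-x^2)/2) / 2) * ((3-x^2)/2) ^ (-p/2) with hF'def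
  set F'' : ℝ → ℝ := fun p : ℝ => (Real.log ((1+x)/2))^2 * ((1+x)/2) ^ (2-p)
    - (Real.log ((1-x)/2))^2 * ((1-x)/2) ^ (2-p)
    + (x * (Real.log ((3-x^2)/2))^2 / 4) * ((3-x^2)/2) ^ (-p/2) with hF''def
  have hF : ∀ p, HasDerivAt F (F' p) p := by
    intro p
    have h1 := rpow_two_sub_hasDeriv hA p
    have h2 := rpow_two_sub_hasDeriv hB p
    have h3 := (rpow_neg_half_hasDeriv hC p).const_mul x
    have h := (h1.fun_sub h2).fun_add h3
    have heq : -(Real.log ((1+x)/2)) * ((1+x)/2) ^ (2-p)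
        - (-(Real.log ((1-x)/2)) * ((1-x)/2) ^ (2-p))
        + x * (-(Real.log ((3-x^2)/2))/2 * ((3-x^2)/2) ^ (-p/2)) = F' p := by
      rw [hF'def]; ring
    rw [← heq]
    exact h
  have hF'' : ∀ p, HasDerivAt F' (F'' p) p := by
    intro p
    have h1 := (rpow_two_sub_hasDeriv hA p).const_mul (-(Real.log ((1+x)/2)))
    have h2 := (rpow_two_sub_hasDeriv hB p).const_mul (Real.log ((1-x)/2))
    have h3 := (rpow_neg_half_hasDeriv hC p).const_mul (x * Real.log ((3-x^2)/2) / 2)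
    have h := (h1.fun_add h2).fun_sub h3
    have heq : (-(Real.log ((1+x)/2)) * (-(Real.log ((1+x)/2)) * ((1+x)/2) ^ (2-p)))
        + (Real.log ((1-x)/2)) * (-(Real.log ((1-x)/2)) * ((1-x)/2) ^ (2-p))
        - (x * Real.log ((3-x^2)/2) / 2) * (-(Real.log ((3-x^2)/2))/2 * ((3-x^2)/2) ^ (-p/2))
        = F'' p := by
      rw [hF''def]; ring
    rw [← heq]
    exact h
  have hd1 : deriv F = F' := funext fun q => (hF q).deriv
  have hcontF : ContinuousOn F (Icc (0:ℝ) 2) :=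
    fun p _ => (hF p).continuousAt.continuousWithinAt
  have hcontF' : ContinuousOn F' (Icc (0:ℝ) 2) :=
    fun p _ => (hF'' p).continuousAt.continuousWithinAt
  -- second derivative negative on [0,2]
  have hQ := keyQ hx0 hx1
  have hFpp : ∀ p ∈ Icc (0:ℝ) 2, F'' p < 0 := by
    intro p hp
    have hu1 : 1 ≤ ((1+x)/2) ^ (-p) :=
      Real.one_le_rpow_of_pos_of_le_one_of_nonpos hA hA1 (by linarith [hp.1])
    have huv : ((1+x)/2) ^ (-p) ≤ ((1-x)/2) ^ (-p) := by
      rw [Real.rpow_neg hA.le, Real.rpow_neg hB.le]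
      have h1 : (0:ℝ) < ((1-x)/2) ^ p := Real.rpow_pos_of_pos hB p
      have h2 : ((1-x)/2) ^ p ≤ ((1+x)/2) ^ p := Real.rpow_le_rpow hB.le hBA hp.1
      exact inv_anti₀ h1 h2
    have hw1 : ((3-x^2)/2) ^ (-p/2) ≤ 1 :=
      Real.rpow_le_one_of_one_le_of_nonpos hC1 (by linarith [hp.1])
    have hw0 : (0:ℝ) < ((3-x^2)/2) ^ (-p/2) := Real.rpow_pos_of_pos hC _
    have hA2 : ((1+x)/2) ^ ((2:ℝ)-p) = ((1+x)/2)^2 * ((1+x)/2) ^ (-p) := by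
      rw [show (2-p:ℝ) = (2:ℝ) + (-p) by ring, Real.rpow_add hA,
        show ((2:ℝ)) = ((2:ℕ):ℝ) by norm_num, Real.rpow_natCast]
    have hB2 : ((1-x)/2) ^ ((2:ℝ)-p) = ((1-x)/2)^2 * ((1-x)/2) ^ (-p) := by
      rw [show (2-p:ℝ) = (2:ℝ) + (-p) by ring, Real.rpow_add hB,
        show ((2:ℝ)) = ((2:ℕ):ℝ) by norm_num, Real.rpow_natCast]
    rw [hF''def]
    simp only
    rw [hA2, hB2]
    have hnnA : (0:ℝ) ≤ (Real.log ((1+x)/2))^2 * ((1+x)/2)^2 := by positivity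
    have hnnB : (0:ℝ) ≤ (Real.log ((1-x)/2))^2 * ((1-x)/2)^2 := by positivity
    have hnnC : (0:ℝ) ≤ x * (Real.log ((3-x^2)/2))^2 / 4 := by positivity
    have hu0 : (0:ℝ) < ((1+x)/2) ^ (-p) := by linarith
    have step1 : (Real.log ((1-x)/2))^2 * ((1-x)/2)^2 * (((1+x)/2) ^ (-p)) ≤
        (Real.log ((1-x)/2))^2 * ((1-x)/2)^2 * (((1-x)/2) ^ (-p)) :=
      mul_le_mul_of_nonneg_left huv hnnB
    have step2 : ((Real.log ((1+x)/2))^2 * ((1+x)/2)^2 + x * (Real.log ((3-x^2)/2))^2 / 4)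
        * (((1+x)/2) ^ (-p)) <
        (Real.log ((1-x)/2))^2 * ((1-x)/2)^2 * (((1+x)/2) ^ (-p)) :=
      mul_lt_mul_of_pos_right hQ hu0
    have step3 : (x * (Real.log ((3-x^2)/2))^2 / 4) * (((3-x^2)/2) ^ (-p/2)) ≤
        (x * (Real.log ((3-x^2)/2))^2 / 4) * (((1+x)/2) ^ (-p)) :=
      mul_le_mul_of_nonneg_left (hw1.trans hu1) hnnC
    nlinarith [step1, step2, step3]
  -- F' is strictly decreasing on [0,2]
  have hantiF' : StrictAntiOn F' (Icc (0:ℝ) 2) := by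
    apply strictAntiOn_of_deriv_neg (convex_Icc _ _) hcontF'
    rw [interior_Icc]
    intro p hp
    rw [(hF'' p).deriv]
    exact hFpp p (Ioo_subset_Icc_self hp)
  -- F' 0 ≤ 0
  have hF'0 : F' 0 ≤ 0 := by
    have hpsi := psi_nonneg hx0 hx1
    have e : F' 0 = -(psi x)/2 := by
      rw [hF'def]
      simp only
      rw [show ((2:ℝ) - 0) = ((2:ℕ):ℝ) by norm_num, Real.rpow_natCast, Real.rpow_natCast,
        show (-(0:ℝ)/2) = (0:ℝ) by norm_num, Real.rpow_zero]
      simp only [psi]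
      ring
    rw [e]
    linarith
  have hF'neg : ∀ p ∈ Ioo (0:ℝ) 2, F' p < 0 := by
    intro p hp
    have := hantiF' (left_mem_Icc.2 (by norm_num)) (Ioo_subset_Icc_self hp) hp.1
    linarith
  constructor
  · apply strictConcaveOn_of_deriv2_neg (convex_Icc _ _) hcontF
    intro p hp
    rw [interior_Icc] at hp
    have h2 : deriv^[2] F p = F'' p := by
      rw [Function.iterate_succ_apply', Function.iterate_one, hd1, (hF'' p).deriv]
    rw [h2]
    exact hFpp p (Ioo_subset_Icc_self hp)
  · apply strictAntiOn_of_deriv_neg (convex_Icc _ _) hcontF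
    intro p hp
    rw [interior_Icc] at hp
    rw [hd1]
    exact hF'neg p hp
end

section
/- Define Ψ_p(s) = ∫_0^∞ |sin(t/√s)/(t/√s)|^s t^{p-1} dt for p ∈ (0,1) and s ≥ 2. Then lim_{s→∞} Ψ_p(s) = 6^{p/2} Γ(p/2)/2, i.e., the limit equals ∫_0^∞ exp(−t^2/6) t^{p-1} dt. -/
open Real MeasureTheory Filter Set

lemma aux_nonneg {f : ℝ → ℝ} (hf : Differentiable ℝ f) (h0 : f 0 = 0)
    (hd : ∀ x, 0 < x → 0 ≤ deriv f x) {x : ℝ} (hx : 0 ≤ x) : 0 ≤ f x := by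
  have hm : MonotoneOn f (Set.Ici 0) :=
    monotoneOn_of_deriv_nonneg (convex_Ici 0) hf.continuous.continuousOn
      (hf.differentiableOn) (by simpa [interior_Ici] using hd)
  calc (0:ℝ) = f 0 := h0.symm
  _ ≤ f x := hm Set.self_mem_Ici hx hx

lemma sin_ge_poly {x : ℝ} (hx : 0 ≤ x) : x - x^3/6 ≤ Real.sin x := by
  have := aux_nonneg (f := fun x => Real.sin x - (x - x^3/6))
    (by fun_prop) (by norm_num) (fun y hy => ?_) hx
  · linarith [this]
  · have h1 : HasDerivAt (fun x : ℝ => Real.sin x - (x - x^3/6))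
        (Real.cos y - (1 - 3*y^2/6)) y := by
      exact ((Real.hasDerivAt_sin y).sub
        ((hasDerivAt_id y).sub (((hasDerivAt_pow 3 y).div_const 6)))).congr_deriv (by norm_num)
    rw [h1.deriv]
    nlinarith [Real.one_sub_sq_div_two_le_cos (x := y)]

lemma cos_le_poly {x : ℝ} (hx : 0 ≤ x) : Real.cos x ≤ 1 - x^2/2 + x^4/24 := by
  have := aux_nonneg (f := fun x => 1 - x^2/2 + x^4/24 - Real.cos x)
    (by fun_prop) (by norm_num) (fun y hy => ?_) hx
  · linarith [this]
  · have h1 : HasDerivAt (fun x : ℝ => 1 - x^2/2 + x^4/24 - Real.cos x)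
        (0 - 2*y^1/2 + 4*y^3/24 - (-Real.sin y)) y := by
      exact ((((hasDerivAt_const y (1:ℝ)).sub ((hasDerivAt_pow 2 y).div_const 2)).add
        ((hasDerivAt_pow 4 y).div_const 24)).sub (Real.hasDerivAt_cos y))
    rw [h1.deriv]
    nlinarith [sin_ge_poly hy.le]

lemma sin_le_poly {x : ℝ} (hx : 0 ≤ x) : Real.sin x ≤ x - x^3/6 + x^5/120 := by
  have := aux_nonneg (f := fun x => x - x^3/6 + x^5/120 - Real.sin x)
    (by fun_prop) (by norm_num) (fun y hy => ?_) hx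
  · linarith [this]
  · have h1 : HasDerivAt (fun x : ℝ => x - x^3/6 + x^5/120 - Real.sin x)
        (1 - 3*y^2/6 + 5*y^4/120 - Real.cos y) y := by
      have := (((hasDerivAt_id y).sub ((hasDerivAt_pow 3 y).div_const 6)).add
        ((hasDerivAt_pow 5 y).div_const 120)).sub (Real.hasDerivAt_sin y)
      exact this.congr_deriv (by norm_num)
    rw [h1.deriv]
    nlinarith [cos_le_poly hy.le]

lemma exp_cubic_lb {x : ℝ} (h0 : 0 ≤ x) (h1 : x ≤ 1) :
    1 - x + x^2/2 - (2/9) * x^3 ≤ Real.exp (-x) := by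
  have hb := Real.exp_bound (x := -x) (by rwa [abs_neg, abs_of_nonneg h0]) (n := 3) (by norm_num)
  have hsum : ∑ i ∈ Finset.range 3, (-x) ^ i / (Nat.factorial i) = 1 - x + x^2/2 := by
    simp [Finset.sum_range_succ, Nat.factorial]
    ring
  rw [hsum, abs_neg, abs_of_nonneg h0] at hb
  norm_num [Nat.factorial] at hb
  have := abs_le.mp hb
  nlinarith [this.1]

lemma sin_le_mul_exp {u : ℝ} (h0 : 0 ≤ u) (h2 : u ≤ 2) :
    Real.sin u ≤ u * Real.exp (-(u^2/6)) := by
  have hx0 : 0 ≤ u^2/6 := by positivity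
  have hx1 : u^2/6 ≤ 1 := by nlinarith
  have he := exp_cubic_lb hx0 hx1
  have hs := sin_le_poly h0
  calc Real.sin u ≤ u - u^3/6 + u^5/120 := hs
  _ ≤ u * (1 - u^2/6 + (u^2/6)^2/2 - (2/9)*(u^2/6)^3) := by
      have h4 : u^2 ≤ 4 := by nlinarith
      nlinarith [mul_le_mul_of_nonneg_left h4 (pow_nonneg h0 5)]
  _ ≤ u * Real.exp (-(u^2/6)) := by
      apply mul_le_mul_of_nonneg_left he h0

lemma two_rpow_ge {s : ℝ} (hs : 2 ≤ s) : s ≤ 2 * (2:ℝ) ^ (s - 2) := by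
  have h1 : Real.log 2 * (s - 2) + 1 ≤ Real.exp (Real.log 2 * (s - 2)) :=
    Real.add_one_le_exp _
  have h2 : (2:ℝ) ^ (s - 2) = Real.exp (Real.log 2 * (s - 2)) := by
    rw [Real.rpow_def_of_pos two_pos]
  rw [h2]
  nlinarith [Real.log_two_gt_d9]

lemma tail_bound {s t : ℝ} (hs : 2 ≤ s) (ht : 2 * Real.sqrt s ≤ t) :
    (Real.sqrt s / t) ^ s ≤ 2 / t ^ 2 := by
  have hs0 : (0:ℝ) < s := by linarith
  have hss : 0 < Real.sqrt s := Real.sqrt_pos.mpr hs0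
  have ht0 : (0:ℝ) < t := lt_of_lt_of_le (by positivity) ht
  set a := Real.sqrt s / t with ha
  have ha0 : 0 < a := by positivity
  have ha2 : a ≤ 1/2 := by
    rw [ha, div_le_div_iff₀ ht0 two_pos]
    linarith
  have hsq : a ^ (2:ℝ) = s / t ^ 2 := by
    rw [Real.rpow_two, ha, div_pow, Real.sq_sqrt hs0.le]
  have hsplit : a ^ s = a ^ (2:ℝ) * a ^ (s - 2) := by
    rw [← Real.rpow_add ha0]; ring_nf
  have hmono : a ^ (s - 2) ≤ (1/2:ℝ) ^ (s - 2) :=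
    Real.rpow_le_rpow ha0.le ha2 (by linarith)
  have hhalf : (1/2:ℝ) ^ (s - 2) = ((2:ℝ) ^ (s - 2))⁻¹ := by
    rw [one_div, Real.inv_rpow (by norm_num)]
  have hpow : (0:ℝ) < (2:ℝ) ^ (s - 2) := Real.rpow_pos_of_pos two_pos _
  have key : s * (1/2:ℝ) ^ (s - 2) ≤ 2 := by
    rw [hhalf, mul_inv_le_iff₀ hpow]
    exact two_rpow_ge hs
  calc a ^ s = a ^ (2:ℝ) * a ^ (s-2) := hsplit
  _ ≤ (s / t ^ 2) * (1/2:ℝ) ^ (s-2) := by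
      rw [hsq]
      exact mul_le_mul_of_nonneg_left hmono (by positivity)
  _ = (s * (1/2:ℝ) ^ (s-2)) / t ^ 2 := by ring
  _ ≤ 2 / t ^ 2 := by
      apply div_le_div_of_nonneg_right key (by positivity) |>.trans_eq rfl

lemma log_ge_one_sub_inv {y : ℝ} (hy : 0 < y) : 1 - 1/y ≤ Real.log y := by
  have := Real.log_le_sub_one_of_pos (x := y⁻¹) (by positivity)
  rw [Real.log_inv] at this
  rw [one_div]
  linarith

lemma sinc_pow_tendsto {t : ℝ} (ht : 0 < t) :
    Tendsto (fun s : ℝ => |Real.sin (t / Real.sqrt s) / (t / Real.sqrt s)| ^ s)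
      atTop (nhds (Real.exp (-t^2/6))) := by
  have hbig : ∀ s : ℝ, max 2 (t^2) ≤ s → 0 < s ∧ 0 < t / Real.sqrt s ∧ t / Real.sqrt s ≤ 1 := by
    intro s hs
    have hs2 : (2:ℝ) ≤ s := le_trans (le_max_left _ _) hs
    have hs0 : (0:ℝ) < s := by linarith
    have hts : t^2 ≤ s := le_trans (le_max_right _ _) hs
    have hss : 0 < Real.sqrt s := Real.sqrt_pos.mpr hs0
    refine ⟨hs0, by positivity, ?_⟩
    rw [div_le_one hss]
    calc t = Real.sqrt (t^2) := (Real.sqrt_sq ht.le).symm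
    _ ≤ Real.sqrt s := Real.sqrt_le_sqrt hts
  have key : ∀ s : ℝ, max 2 (t^2) ≤ s →
      (-t^2/6 - t^4/(18*s) ≤ s * Real.log |Real.sin (t / Real.sqrt s) / (t / Real.sqrt s)| ∧
       s * Real.log |Real.sin (t / Real.sqrt s) / (t / Real.sqrt s)| ≤ -t^2/6 ∧
       0 < |Real.sin (t / Real.sqrt s) / (t / Real.sqrt s)|) := by
    intro s hs
    obtain ⟨hs0, hu0, hu1⟩ := hbig s hs
    set u := t / Real.sqrt s with hu
    have hsin0 : 0 < Real.sin u :=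
      Real.sin_pos_of_pos_of_lt_pi hu0 (lt_of_le_of_lt hu1 (by linarith [Real.pi_gt_three]))
    have hsinc0 : 0 < Real.sin u / u := div_pos hsin0 hu0
    have habs : |Real.sin u / u| = Real.sin u / u := abs_of_pos hsinc0
    have hu2 : u^2 = t^2/s := by
      rw [hu, div_pow, Real.sq_sqrt hs0.le]
    -- upper bound
    have hupper : Real.sin u / u ≤ Real.exp (-(u^2/6)) := by
      rw [div_le_iff₀ hu0, mul_comm]
      exact sin_le_mul_exp hu0.le (by linarith)
    have hlogup : Real.log (Real.sin u / u) ≤ -(u^2/6) :=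
      (Real.log_le_iff_le_exp hsinc0).mpr hupper
    -- lower bound
    have hx6 : u^2/6 ≤ 1/6 := by nlinarith
    have hpos6 : (0:ℝ) < 1 - u^2/6 := by linarith
    have hlow1 : 1 - u^2/6 ≤ Real.sin u / u := by
      rw [le_div_iff₀ hu0]
      nlinarith [sin_ge_poly hu0.le]
    have hinv : 1/(1 - u^2/6) ≤ 1 + u^2/6 + 2*(u^2/6)^2 := by
      rw [div_le_iff₀ hpos6]
      nlinarith [sq_nonneg (u^2/6), pow_nonneg (sq_nonneg u) 2]
    have hloglow : -(u^2/6) - 2*(u^2/6)^2 ≤ Real.log (Real.sin u / u) := by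
      have h1 := log_ge_one_sub_inv hpos6
      have h2 := Real.log_le_log hpos6 hlow1
      linarith [h2, h1, hinv]
    constructor
    · rw [habs]
      have := mul_le_mul_of_nonneg_left hloglow hs0.le
      calc -t^2/6 - t^4/(18*s) = s * (-(u^2/6) - 2*(u^2/6)^2) := by
            rw [hu2]; field_simp; ring
      _ ≤ s * Real.log (Real.sin u / u) := this
    constructor
    · rw [habs]
      have := mul_le_mul_of_nonneg_left hlogup hs0.le
      calc s * Real.log (Real.sin u / u) ≤ s * (-(u^2/6)) := this
      _ = -t^2/6 := by rw [hu2]; field_simp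
    · rw [habs]; exact hsinc0
  have hL : Tendsto (fun s : ℝ => s * Real.log |Real.sin (t / Real.sqrt s) / (t / Real.sqrt s)|)
      atTop (nhds (-t^2/6)) := by
    have h1 : Tendsto (fun s : ℝ => -t^2/6 - t^4/(18*s)) atTop (nhds (-t^2/6)) := by
      have h2 : Tendsto (fun s : ℝ => t^4/(18*s)) atTop (nhds 0) := by
        have := tendsto_inv_atTop_zero.const_mul (t^4/18)
        rw [mul_zero] at this
        refine this.congr fun s => ?_
        field_simp
      simpa using tendsto_const_nhds.sub h2
    refine tendsto_of_tendsto_of_tendsto_of_le_of_le' h1 tendsto_const_nhds ?_ ?_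
    · filter_upwards [eventually_ge_atTop (max 2 (t^2))] with s hs
      exact (key s hs).1
    · filter_upwards [eventually_ge_atTop (max 2 (t^2))] with s hs
      exact (key s hs).2.1
  have := (Real.continuous_exp.tendsto _).comp hL
  refine this.congr' ?_
  filter_upwards [eventually_ge_atTop (max 2 (t^2))] with s hs
  have hpos := (key s hs).2.2
  simp only [Function.comp_apply]
  rw [Real.rpow_def_of_pos hpos, mul_comm]

theorem psi_part1 {p : ℝ} (hp : p ∈ Set.Ioo (0:ℝ) 1) :
    Tendsto
      (fun s : ℝ =>
        ∫ t in Ioi (0:ℝ),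
          |Real.sin (t / Real.sqrt s) / (t / Real.sqrt s)| ^ s * t ^ (p - 1))
      atTop (nhds (∫ t in Ioi (0:ℝ), Real.exp (-t ^ 2 / 6) * t ^ (p - 1))) := by
  obtain ⟨hp0, hp1⟩ := hp
  set g : ℝ → ℝ := fun t => Real.exp (-t^2/6) * t^(p-1)
      + Set.indicator (Ioi 1) (fun t => 2 * t^(p-3)) t with hg
  apply MeasureTheory.tendsto_integral_filter_of_dominated_convergence g
  · -- measurability
    filter_upwards with s
    apply Measurable.aestronglyMeasurable
    fun_prop
  · -- bound
    filter_upwards [eventually_ge_atTop (2:ℝ)] with s hs2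
    rw [ae_restrict_iff' measurableSet_Ioi]
    filter_upwards with t ht
    have ht0 : (0:ℝ) < t := ht
    have hs0 : (0:ℝ) < s := by linarith
    have hss : 0 < Real.sqrt s := Real.sqrt_pos.mpr hs0
    have hu0 : 0 < t / Real.sqrt s := by positivity
    have htp : (0:ℝ) ≤ t ^ (p-1) := Real.rpow_nonneg ht0.le _
    have hFnn : (0:ℝ) ≤ |Real.sin (t / Real.sqrt s) / (t / Real.sqrt s)| ^ s * t ^ (p - 1) := by
      apply mul_nonneg (Real.rpow_nonneg (abs_nonneg _) _) htp
    rw [Real.norm_of_nonneg hFnn]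
    rcases le_or_gt t (2 * Real.sqrt s) with hcase | hcase
    · -- small t: gaussian bound
      set u := t / Real.sqrt s with hu
      have hu2 : u ≤ 2 := by
        rw [hu, div_le_iff₀ hss]; linarith
      have hsin0 : 0 < Real.sin u :=
        Real.sin_pos_of_pos_of_lt_pi hu0 (lt_of_le_of_lt hu2 (by linarith [Real.pi_gt_three]))
      have habs : |Real.sin u / u| = Real.sin u / u := abs_of_pos (div_pos hsin0 hu0)
      have hb : |Real.sin u / u| ≤ Real.exp (-(u^2/6)) := by
        rw [habs, div_le_iff₀ hu0, mul_comm]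
        exact sin_le_mul_exp hu0.le hu2
      have hpow : |Real.sin u / u| ^ s ≤ Real.exp (-(u^2/6)) ^ s :=
        Real.rpow_le_rpow (abs_nonneg _) hb hs0.le
      have hu2s : u^2 = t^2/s := by
        rw [hu, div_pow, Real.sq_sqrt hs0.le]
      have hexp : Real.exp (-(u^2/6)) ^ s = Real.exp (-t^2/6) := by
        rw [← Real.exp_mul, hu2s]
        congr 1
        field_simp
      calc |Real.sin u / u| ^ s * t ^ (p - 1)
          ≤ Real.exp (-t^2/6) * t^(p-1) := by
            refine mul_le_mul_of_nonneg_right ?_ htp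
            rw [← hexp]; exact hpow
      _ ≤ g t := le_add_of_nonneg_right (Set.indicator_nonneg
            (fun x hx => mul_nonneg two_pos.le
              (Real.rpow_nonneg (zero_le_one.trans (le_of_lt hx)) _)) t)
    · -- large t: tail bound
      have h1s : (1:ℝ) ≤ Real.sqrt s := by
        rw [show (1:ℝ) = Real.sqrt 1 by simp]
        exact Real.sqrt_le_sqrt (by linarith)
      have ht1 : 1 < t := by nlinarith
      set u := t / Real.sqrt s with hu
      have hb : |Real.sin u / u| ≤ Real.sqrt s / t := by
        have h1 : |Real.sin u / u| ≤ 1/u := by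
          rw [abs_div, abs_of_pos hu0]
          gcongr
          exact abs_le.mpr ⟨Real.neg_one_le_sin u, Real.sin_le_one u⟩
        rw [hu, one_div_div] at h1
        exact h1
      have hpow : |Real.sin u / u| ^ s ≤ 2 / t^2 := by
        calc |Real.sin u / u| ^ s ≤ (Real.sqrt s / t) ^ s :=
              Real.rpow_le_rpow (abs_nonneg _) hb hs0.le
        _ ≤ 2 / t^2 := tail_bound hs2 hcase.le
      have hval : 2/t^2 * t^(p-1) = 2 * t^(p-3) := by
        rw [div_mul_eq_mul_div, mul_div_assoc, ← Real.rpow_two, ← Real.rpow_sub ht0]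
        norm_num
        ring_nf
      calc |Real.sin u / u| ^ s * t ^ (p - 1)
          ≤ 2/t^2 * t^(p-1) := mul_le_mul_of_nonneg_right hpow htp
      _ = 2 * t^(p-3) := hval
      _ = Set.indicator (Ioi 1) (fun t => 2 * t^(p-3)) t :=
            by rw [Set.indicator_of_mem (Set.mem_Ioi.mpr ht1)]
      _ ≤ g t := le_add_of_nonneg_left (by positivity)
  · -- integrability of g
    apply Integrable.add
    · have h1 := (integrable_rpow_mul_exp_neg_mul_sq (b := 1/6) (by norm_num)
        (s := p-1) (by linarith)).restrict (s := Ioi 0)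
      refine h1.congr ?_
      filter_upwards with x
      rw [show -(1/6:ℝ) * x^2 = -x^2/6 by ring]
      ring_nf
    · have h2 : IntegrableOn (fun t : ℝ => 2 * t^(p-3)) (Ioi 1) :=
        (integrableOn_Ioi_rpow_of_lt (by linarith) one_pos).const_mul 2
      exact ((integrable_indicator_iff measurableSet_Ioi).mpr h2).restrict
  · -- pointwise limit
    rw [ae_restrict_iff' measurableSet_Ioi]
    filter_upwards with t ht
    exact (sinc_pow_tendsto ht).mul_const _

theorem psi_tendsto_gaussian {p : ℝ} (hp : p ∈ Set.Ioo (0:ℝ) 1) :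
    Tendsto
      (fun s : ℝ =>
        ∫ t in Ioi (0:ℝ),
          |Real.sin (t / Real.sqrt s) / (t / Real.sqrt s)| ^ s * t ^ (p - 1))
      atTop (nhds ((6:ℝ) ^ (p / 2) * Real.Gamma (p / 2) / 2)) ∧
    ∫ t in Ioi (0:ℝ), Real.exp (-t ^ 2 / 6) * t ^ (p - 1)
      = (6:ℝ) ^ (p / 2) * Real.Gamma (p / 2) / 2 := by
  obtain ⟨hp0, hp1⟩ := hp
  have h2 : ∫ t in Ioi (0:ℝ), Real.exp (-t ^ 2 / 6) * t ^ (p - 1)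
      = (6:ℝ) ^ (p / 2) * Real.Gamma (p / 2) / 2 := by
    have h := integral_rpow_mul_exp_neg_mul_rpow (p := 2) (q := p - 1) (b := 1/6)
      two_pos (by linarith) (by norm_num)
    have hL : ∫ t in Ioi (0:ℝ), Real.exp (-t ^ 2 / 6) * t ^ (p - 1)
        = ∫ x in Ioi (0:ℝ), x ^ (p-1) * Real.exp (-(1/6) * x ^ (2:ℝ)) := by
      refine setIntegral_congr_fun measurableSet_Ioi (fun x hx => ?_)
      rw [Real.rpow_two]
      rw [show -(1/6:ℝ) * x ^ 2 = -x^2/6 by ring]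
      ring
    rw [hL, h]
    rw [show -(p-1+1)/2 = -(p/2) by ring, show (p-1+1)/2 = p/2 by ring]
    rw [one_div, Real.inv_rpow (by norm_num), Real.rpow_neg (by norm_num), inv_inv]
    ring
  refine ⟨?_, h2⟩
  rw [← h2]
  exact psi_part1 ⟨hp0, hp1⟩
end
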